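/- arXiv:2303.06646 — 2 statements merged into one kernel-verified Lean document; each statement's English description precedes it below -/
import Mathlib

section
/- Let (M, E) be an exact category and 𝒫 a pseudo-cluster tilting subcategory of M. Then the quotient category M/𝒫 is a semi-abelian category: it has kernels and cokernels, and for every morphism of M/𝒫 the canonical morphism from its coimage to its image is both an epimorphism and a monomorphism. -/
open CategoryTheory CategoryTheory.Limits

universe v u

namespace PaperQEC

section QuotientCategory

variable {C : Type u} [Category.{v} C] [Preadditive C]

/-- `f` factors through an object belonging to `P`. -/
def FactorsThru (P : Set C) {X Y : C} (f : X ⟶ Y) : Prop :=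
  ∃ Z ∈ P, ∃ (g : X ⟶ Z) (h : Z ⟶ Y), g ≫ h = f

/-- The subgroup of `Hom(X, Y)` generated by morphisms factoring through an object of `P`
(for `P` closed under finite sums this is just the set of such morphisms). -/
def factorIdeal (P : Set C) (X Y : C) : AddSubgroup (X ⟶ Y) :=
  AddSubgroup.closure {f | FactorsThru P f}

lemma factorIdeal_comp_left (P : Set C) {X Y Z : C} {f : X ⟶ Y}
    (hf : f ∈ factorIdeal P X Y) (g : Y ⟶ Z) : f ≫ g ∈ factorIdeal P X Z := by
  have h : factorIdeal P X Y ≤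
      (factorIdeal P X Z).comap (AddMonoidHom.mk' (fun u : X ⟶ Y => u ≫ g)
        (fun a b => Preadditive.add_comp _ _ _ _ _ _)) := by
    refine (AddSubgroup.closure_le _).mpr ?_
    rintro u ⟨Zp, hZp, a, b, rfl⟩
    exact AddSubgroup.mem_comap.mpr
      (AddSubgroup.subset_closure ⟨Zp, hZp, a, b ≫ g, (Category.assoc _ _ _).symm⟩)
  exact h hf

lemma factorIdeal_comp_right (P : Set C) {X Y Z : C} (f : X ⟶ Y) {g : Y ⟶ Z}
    (hg : g ∈ factorIdeal P Y Z) : f ≫ g ∈ factorIdeal P X Z := by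
  have h : factorIdeal P Y Z ≤
      (factorIdeal P X Z).comap (AddMonoidHom.mk' (fun u : Y ⟶ Z => f ≫ u)
        (fun a b => Preadditive.comp_add _ _ _ _ _ _)) := by
    refine (AddSubgroup.closure_le _).mpr ?_
    rintro u ⟨Zp, hZp, a, b, rfl⟩
    exact AddSubgroup.mem_comap.mpr
      (AddSubgroup.subset_closure ⟨Zp, hZp, f ≫ a, b, Category.assoc _ _ _⟩)
  exact h hg

/-- Objects of the quotient (stable) category `C / P`. -/
structure QuotObj (P : Set C) : Type u where
  obj : C

variable (P : Set C)

instance quotCategory : Category.{v} (QuotObj P) where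
  Hom A B := (A.obj ⟶ B.obj) ⧸ factorIdeal P A.obj B.obj
  id A := QuotientAddGroup.mk (𝟙 A.obj)
  comp {A B D} f g :=
    Quotient.liftOn₂ f g (fun a b => QuotientAddGroup.mk (a ≫ b)) (by
      intro a₁ b₁ a₂ b₂ ha hb
      have ha' : -a₁ + a₂ ∈ factorIdeal P A.obj B.obj := QuotientAddGroup.leftRel_apply.mp ha
      have hb' : -b₁ + b₂ ∈ factorIdeal P B.obj D.obj := QuotientAddGroup.leftRel_apply.mp hb
      refine (QuotientAddGroup.eq (s := factorIdeal P A.obj D.obj)).mpr ?_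
      have h1 : (-a₁ + a₂) ≫ b₁ ∈ factorIdeal P A.obj D.obj :=
        factorIdeal_comp_left P ha' b₁
      have h2 : a₂ ≫ (-b₁ + b₂) ∈ factorIdeal P A.obj D.obj :=
        factorIdeal_comp_right P a₂ hb'
      have h3 := AddSubgroup.add_mem _ h1 h2
      have heq : -(a₁ ≫ b₁) + a₂ ≫ b₂ = (-a₁ + a₂) ≫ b₁ + a₂ ≫ (-b₁ + b₂) := by
        simp only [Preadditive.add_comp, Preadditive.comp_add, Preadditive.neg_comp,
          Preadditive.comp_neg]
        abel
      rw [heq]; exact h3)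
  id_comp {A B} f := by
    induction f using Quotient.inductionOn with
    | h a => exact congrArg QuotientAddGroup.mk (Category.id_comp a)
  comp_id {A B} f := by
    induction f using Quotient.inductionOn with
    | h a => exact congrArg QuotientAddGroup.mk (Category.comp_id a)
  assoc {A B D E} f g h := by
    induction f using Quotient.inductionOn with
    | h a =>
    induction g using Quotient.inductionOn with
    | h b =>
    induction h using Quotient.inductionOn with
    | h c => exact congrArg QuotientAddGroup.mk (Category.assoc a b c)

/-- The image in the quotient category of a morphism of `C`. -/
def qmap {X Y : C} (f : X ⟶ Y) : (QuotObj.mk X : QuotObj P) ⟶ QuotObj.mk Y :=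
  QuotientAddGroup.mk f

instance quotPreadditive : Preadditive (QuotObj P) where
  homGroup A B :=
    inferInstanceAs (AddCommGroup ((A.obj ⟶ B.obj) ⧸ factorIdeal P A.obj B.obj))
  add_comp A B D f f' g := by
    induction f using Quotient.inductionOn with
    | h a =>
    induction f' using Quotient.inductionOn with
    | h a' =>
    induction g using Quotient.inductionOn with
    | h b =>
      show QuotientAddGroup.mk ((a + a') ≫ b) =
        QuotientAddGroup.mk (a ≫ b) + QuotientAddGroup.mk (a' ≫ b)
      rw [Preadditive.add_comp]
      rfl
  comp_add A B D f g g' := by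
    induction f using Quotient.inductionOn with
    | h a =>
    induction g using Quotient.inductionOn with
    | h b =>
    induction g' using Quotient.inductionOn with
    | h b' =>
      show QuotientAddGroup.mk (a ≫ (b + b')) =
        QuotientAddGroup.mk (a ≫ b) + QuotientAddGroup.mk (a ≫ b')
      rw [Preadditive.comp_add]
      rfl

end QuotientCategory

section Exact

variable {C : Type u} [Category.{v} C] [Preadditive C]

/-- `k` is a kernel of `f`. -/
def IsKernelOf {K X Y : C} (k : K ⟶ X) (f : X ⟶ Y) : Prop :=
  k ≫ f = 0 ∧ ∀ {T : C} (g : T ⟶ X), g ≫ f = 0 → ∃! t : T ⟶ K, t ≫ k = g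

/-- `c` is a cokernel of `f`. -/
def IsCokernelOf {X Y Q : C} (c : Y ⟶ Q) (f : X ⟶ Y) : Prop :=
  f ≫ c = 0 ∧ ∀ {T : C} (g : Y ⟶ T), f ≫ g = 0 → ∃! t : Q ⟶ T, c ≫ t = g

/-- A class of composable pairs of morphisms (the prospective conflations). -/
abbrev ConfClass (D : Type*) [Category D] :=
  ∀ ⦃X Y Z : D⦄, (X ⟶ Y) → (Y ⟶ Z) → Prop

/-- A Quillen exact structure on an additive category: a class of kernel–cokernel pairs
(conflations), closed under isomorphisms, containing the identities as inflations and
deflations, with inflations and deflations closed under composition, pushouts of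
inflations and pullbacks of deflations existing and being inflations resp. deflations. -/
structure ExactStructure (D : Type u) [Category.{v} D] [Preadditive D] where
  conf : ConfClass D
  ker_of_conf : ∀ {X Y Z : D} {i : X ⟶ Y} {d : Y ⟶ Z}, conf i d → IsKernelOf i d
  coker_of_conf : ∀ {X Y Z : D} {i : X ⟶ Y} {d : Y ⟶ Z}, conf i d → IsCokernelOf d i
  isoClosed : ∀ {X Y Z X' Y' Z' : D} {i : X ⟶ Y} {d : Y ⟶ Z} {i' : X' ⟶ Y'} {d' : Y' ⟶ Z'}
    (eX : X ≅ X') (eY : Y ≅ Y') (eZ : Z ≅ Z'),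
    i ≫ eY.hom = eX.hom ≫ i' → d ≫ eZ.hom = eY.hom ≫ d' → conf i d → conf i' d'
  id_isInflation : ∀ X : D, ∃ (Z : D) (d : X ⟶ Z), conf (𝟙 X) d
  id_isDeflation : ∀ X : D, ∃ (W : D) (i : W ⟶ X), conf i (𝟙 X)
  infl_comp : ∀ {X Y Z : D} (i : X ⟶ Y) (j : Y ⟶ Z),
    (∃ (W : D) (d : Y ⟶ W), conf i d) → (∃ (W : D) (d : Z ⟶ W), conf j d) →
    ∃ (W : D) (d : Z ⟶ W), conf (i ≫ j) d
  defl_comp : ∀ {X Y Z : D} (p : X ⟶ Y) (q : Y ⟶ Z),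
    (∃ (W : D) (i : W ⟶ X), conf i p) → (∃ (W : D) (i : W ⟶ Y), conf i q) →
    ∃ (W : D) (i : W ⟶ X), conf i (p ≫ q)
  infl_pushout : ∀ {X Y : D} (i : X ⟶ Y), (∃ (W : D) (d : Y ⟶ W), conf i d) →
    ∀ {A : D} (f : X ⟶ A), ∃ (B : D) (i' : A ⟶ B) (g : Y ⟶ B),
      (∃ (W : D) (d : B ⟶ W), conf i' d) ∧ IsPushout i f g i'
  defl_pullback : ∀ {Y Z : D} (p : Y ⟶ Z), (∃ (W : D) (i : W ⟶ Y), conf i p) →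
    ∀ {B : D} (f : B ⟶ Z), ∃ (A : D) (p' : A ⟶ B) (g : A ⟶ Y),
      (∃ (W : D) (i : W ⟶ A), conf i p') ∧ IsPullback g p' p f

/-- `i` is an inflation, i.e. the first map of some conflation. -/
def IsInflation (E : ConfClass C) {X Y : C} (i : X ⟶ Y) : Prop :=
  ∃ (Z : C) (d : Y ⟶ Z), E i d

/-- `d` is a deflation, i.e. the second map of some conflation. -/
def IsDeflation (E : ConfClass C) {Y Z : C} (d : Y ⟶ Z) : Prop :=
  ∃ (X : C) (i : X ⟶ Y), E i d

/-- `P` is a full additive subcategory: nonempty, closed under isomorphisms,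
finite sums and summands. -/
structure IsAddSubcat [HasBinaryBiproducts C] (P : Set C) : Prop where
  nonempty : P.Nonempty
  isoClosed : ∀ {X Y : C}, (X ≅ Y) → X ∈ P → Y ∈ P
  sumClosed : ∀ {X Y : C}, X ∈ P → Y ∈ P → (X ⊞ Y) ∈ P
  summandClosed : ∀ {X Y : C} (s : X ⟶ Y) (r : Y ⟶ X), s ≫ r = 𝟙 X → Y ∈ P → X ∈ P

/-- `f : Q ⟶ X` is a `P`-precover of `X`. -/
def IsPrecover (P : Set C) {Q X : C} (f : Q ⟶ X) : Prop :=
  Q ∈ P ∧ ∀ (Q' : C), Q' ∈ P → ∀ g : Q' ⟶ X, ∃ h : Q' ⟶ Q, h ≫ f = g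

/-- `f : X ⟶ Q` is a `P`-preenvelope of `X`. -/
def IsPreenvelope (P : Set C) {X Q : C} (f : X ⟶ Q) : Prop :=
  Q ∈ P ∧ ∀ (Q' : C), Q' ∈ P → ∀ g : X ⟶ Q', ∃ h : Q ⟶ Q', f ≫ h = g

/-- `P` is strongly contravariantly finite: every object has a `P`-precover
which is a deflation. -/
def StronglyContraFinite (E : ConfClass C) (P : Set C) : Prop :=
  ∀ X : C, ∃ (Q : C) (f : Q ⟶ X), IsPrecover P f ∧ IsDeflation E f

/-- `P` is strongly covariantly finite: every object has a `P`-preenvelope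
which is an inflation. -/
def StronglyCovFinite (E : ConfClass C) (P : Set C) : Prop :=
  ∀ X : C, ∃ (Q : C) (f : X ⟶ Q), IsPreenvelope P f ∧ IsInflation E f

/-- The pair `(i, d)` is `Hom(P,-)`-exact: for every `Q ∈ P`, the sequence
`0 → Hom(Q,X) → Hom(Q,Y) → Hom(Q,Z) → 0` is exact. -/
def HomCovExact (P : Set C) {X Y Z : C} (i : X ⟶ Y) (d : Y ⟶ Z) : Prop :=
  ∀ Q : C, Q ∈ P →
    (∀ g : Q ⟶ X, g ≫ i = 0 → g = 0) ∧
    (∀ u : Q ⟶ Y, u ≫ d = 0 → ∃ g : Q ⟶ X, g ≫ i = u) ∧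
    (∀ h : Q ⟶ Z, ∃ u : Q ⟶ Y, u ≫ d = h)

/-- The pair `(i, d)` is `Hom(-,P)`-exact: for every `Q ∈ P`, the sequence
`0 → Hom(Z,Q) → Hom(Y,Q) → Hom(X,Q) → 0` is exact. -/
def HomContraExact (P : Set C) {X Y Z : C} (i : X ⟶ Y) (d : Y ⟶ Z) : Prop :=
  ∀ Q : C, Q ∈ P →
    (∀ g : Z ⟶ Q, d ≫ g = 0 → g = 0) ∧
    (∀ u : Y ⟶ Q, i ≫ u = 0 → ∃ g : Z ⟶ Q, d ≫ g = u) ∧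
    (∀ h : X ⟶ Q, ∃ u : Y ⟶ Q, i ≫ u = h)

/-- Condition (▲): `P` is strongly covariantly finite and every `X` admits a conflation
`0 → X → Q₀ → Q₁ → 0` with `Q₀, Q₁ ∈ P` whose inflation is a `P`-preenvelope. -/
def CondEnv (E : ConfClass C) (P : Set C) : Prop :=
  StronglyCovFinite E P ∧
  ∀ X : C, ∃ (Q₀ Q₁ : C) (α : X ⟶ Q₀) (q : Q₀ ⟶ Q₁),
    E α q ∧ Q₀ ∈ P ∧ Q₁ ∈ P ∧ IsPreenvelope P α

/-- Condition (▼): `P` is strongly contravariantly finite and every `X` admits a conflation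
`0 → P₁ → P₀ → X → 0` with `P₀, P₁ ∈ P` whose deflation is a `P`-precover. -/
def CondCov (E : ConfClass C) (P : Set C) : Prop :=
  StronglyContraFinite E P ∧
  ∀ X : C, ∃ (P₀ P₁ : C) (i : P₁ ⟶ P₀) (β : P₀ ⟶ X),
    E i β ∧ P₀ ∈ P ∧ P₁ ∈ P ∧ IsPrecover P β

/-- `P` is a pseudo-cluster tilting subcategory. -/
def PseudoClusterTilting (E : ConfClass C) (P : Set C) : Prop :=
  CondEnv E P ∧ CondCov E P

/-- The conflation `(i, d)` splits. -/
def Splits {X Y Z : C} (i : X ⟶ Y) (d : Y ⟶ Z) : Prop :=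
  (∃ r : Y ⟶ X, i ≫ r = 𝟙 X) ∧ ∃ s : Z ⟶ Y, s ≫ d = 𝟙 Z

/-- `P` is self-orthogonal with respect to the class `cl` of conflations: every
conflation in `cl` with both end terms in `P` splits. -/
def SelfOrthWrt (P : Set C) (cl : ConfClass C) : Prop :=
  ∀ ⦃X Y Z : C⦄ (i : X ⟶ Y) (d : Y ⟶ Z), cl i d → X ∈ P → Z ∈ P → Splits i d

/-- `P` is a cluster tilting subcategory: a pseudo-cluster tilting subcategory which is
self-orthogonal with respect to all conflations. -/
def ClusterTilting (E : ConfClass C) (P : Set C) : Prop :=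
  PseudoClusterTilting E P ∧ SelfOrthWrt P E

/-- The class `𝒮` of conflations. -/
def memS (E : ConfClass C) (P : Set C) ⦃S₁ S₂ S₃ : C⦄ (i : S₁ ⟶ S₂) (d : S₂ ⟶ S₃) : Prop :=
  E i d ∧ ∃ (U M₁ M₂ : C) (u₁ : U ⟶ S₁) (p₁ : S₁ ⟶ M₁) (u₂ : U ⟶ S₂) (p₂ : S₂ ⟶ M₂)
    (m : M₁ ⟶ M₂) (q : M₂ ⟶ S₃),
    E u₁ p₁ ∧ E u₂ p₂ ∧ E m q ∧
    HomCovExact P u₂ p₂ ∧ HomContraExact P m q ∧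
    u₁ ≫ i = u₂ ∧ i ≫ p₂ = p₁ ≫ m ∧ d = p₂ ≫ q

/-- The class `𝒯` of conflations. -/
def memT (E : ConfClass C) (P : Set C) ⦃T₁ T₂ T₃ : C⦄ (i : T₁ ⟶ T₂) (d : T₂ ⟶ T₃) : Prop :=
  E i d ∧ ∃ (V N₂ N₃ : C) (n₁ : T₁ ⟶ N₂) (n₂ : N₂ ⟶ N₃) (j₂ : N₂ ⟶ T₂) (v₂ : T₂ ⟶ V)
    (j₃ : N₃ ⟶ T₃) (v₃ : T₃ ⟶ V),
    E n₁ n₂ ∧ E j₂ v₂ ∧ E j₃ v₃ ∧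
    HomCovExact P n₁ n₂ ∧ HomContraExact P j₂ v₂ ∧
    i = n₁ ≫ j₂ ∧ n₂ ≫ j₃ = j₂ ≫ d ∧ d ≫ v₃ = v₂

end Exact

section AbelianDefs

/-- A preadditive category is abelian (in the sense of Definition 2.1 of the paper) if it
has kernels and cokernels and the canonical morphism from the coimage to the image of any
morphism is an isomorphism. -/
def IsAbelianCat (D : Type*) [Category D] [Preadditive D] : Prop :=
  ∃ (hk : HasKernels D) (hc : HasCokernels D),
    ∀ {X Y : D} (f : X ⟶ Y),
      haveI := hk; haveI := hc; IsIso (CategoryTheory.Abelian.coimageImageComparison f)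

/-- A preadditive category is semi-abelian if it has kernels and cokernels and the
canonical morphism from the coimage to the image of any morphism is both an epimorphism
and a monomorphism. -/
def IsSemiAbelianCat (D : Type*) [Category D] [Preadditive D] : Prop :=
  ∃ (hk : HasKernels D) (hc : HasCokernels D),
    ∀ {X Y : D} (f : X ⟶ Y),
      haveI := hk; haveI := hc;
      Mono (CategoryTheory.Abelian.coimageImageComparison f) ∧
      Epi (CategoryTheory.Abelian.coimageImageComparison f)

end AbelianDefs

section ConflationCategory

variable {M : Type u} [Category.{v} M] [Preadditive M]

/-- Objects of the category `E(M)` of conflations: conflations `0 → X₁ → X₂ → X₃ → 0`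
of the exact category `(M, E)`. -/
structure ConfObj (E : ExactStructure M) : Type max u v where
  X₁ : M
  X₂ : M
  X₃ : M
  i : X₁ ⟶ X₂
  d : X₂ ⟶ X₃
  conf : E.conf i d

variable {E : ExactStructure M}

/-- The additive group of morphisms of conflations: triples of morphisms making the two
squares commute. -/
def confHomGroup (A B : ConfObj E) :
    AddSubgroup ((A.X₁ ⟶ B.X₁) × (A.X₂ ⟶ B.X₂) × (A.X₃ ⟶ B.X₃)) where
  carrier := {t | A.i ≫ t.2.1 = t.1 ≫ B.i ∧ A.d ≫ t.2.2 = t.2.1 ≫ B.d}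
  zero_mem' := by simp
  add_mem' := by
    rintro a b ⟨ha₁, ha₂⟩ ⟨hb₁, hb₂⟩
    refine ⟨?_, ?_⟩ <;>
      simp [Preadditive.comp_add, Preadditive.add_comp, ha₁, ha₂, hb₁, hb₂]
  neg_mem' := by
    rintro a ⟨h₁, h₂⟩
    refine ⟨?_, ?_⟩ <;> simp [h₁, h₂]

instance confCategoryStruct : CategoryStruct.{v} (ConfObj E) where
  Hom A B := ↥(confHomGroup A B)
  id A := ⟨(𝟙 _, 𝟙 _, 𝟙 _), by constructor <;> simp⟩
  comp {A B D} f g := ⟨(f.1.1 ≫ g.1.1, f.1.2.1 ≫ g.1.2.1, f.1.2.2 ≫ g.1.2.2), by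
    obtain ⟨hf₁, hf₂⟩ := f.2
    obtain ⟨hg₁, hg₂⟩ := g.2
    constructor
    · rw [← Category.assoc, hf₁, Category.assoc, hg₁, ← Category.assoc]
    · rw [← Category.assoc, hf₂, Category.assoc, hg₂, ← Category.assoc]⟩

/-- Degree `-1` component of a morphism of conflations. -/
def homC₁ {A B : ConfObj E} (f : A ⟶ B) : A.X₁ ⟶ B.X₁ := f.1.1

/-- Degree `0` component of a morphism of conflations. -/
def homC₂ {A B : ConfObj E} (f : A ⟶ B) : A.X₂ ⟶ B.X₂ := f.1.2.1

/-- Degree `1` component of a morphism of conflations. -/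
def homC₃ {A B : ConfObj E} (f : A ⟶ B) : A.X₃ ⟶ B.X₃ := f.1.2.2

lemma confHom_ext {A B : ConfObj E} {f g : A ⟶ B} (h₁ : homC₁ f = homC₁ g)
    (h₂ : homC₂ f = homC₂ g) (h₃ : homC₃ f = homC₃ g) : f = g := by
  apply Subtype.ext
  show (homC₁ f, homC₂ f, homC₃ f) = (homC₁ g, homC₂ g, homC₃ g)
  rw [h₁, h₂, h₃]

@[simp] lemma homC₁_id (A : ConfObj E) : homC₁ (𝟙 A) = 𝟙 A.X₁ := rfl
@[simp] lemma homC₂_id (A : ConfObj E) : homC₂ (𝟙 A) = 𝟙 A.X₂ := rfl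
@[simp] lemma homC₃_id (A : ConfObj E) : homC₃ (𝟙 A) = 𝟙 A.X₃ := rfl
@[simp] lemma homC₁_comp {A B D : ConfObj E} (f : A ⟶ B) (g : B ⟶ D) :
    homC₁ (f ≫ g) = homC₁ f ≫ homC₁ g := rfl
@[simp] lemma homC₂_comp {A B D : ConfObj E} (f : A ⟶ B) (g : B ⟶ D) :
    homC₂ (f ≫ g) = homC₂ f ≫ homC₂ g := rfl
@[simp] lemma homC₃_comp {A B D : ConfObj E} (f : A ⟶ B) (g : B ⟶ D) :
    homC₃ (f ≫ g) = homC₃ f ≫ homC₃ g := rfl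

instance confCategory : Category.{v} (ConfObj E) where
  id_comp f := confHom_ext (by simp) (by simp) (by simp)
  comp_id f := confHom_ext (by simp) (by simp) (by simp)
  assoc f g h := confHom_ext (by simp) (by simp) (by simp)

instance confHomAddCommGroup (A B : ConfObj E) : AddCommGroup (A ⟶ B) :=
  inferInstanceAs (AddCommGroup ↥(confHomGroup A B))

@[simp] lemma homC₁_add {A B : ConfObj E} (f g : A ⟶ B) :
    homC₁ (f + g) = homC₁ f + homC₁ g := rfl
@[simp] lemma homC₂_add {A B : ConfObj E} (f g : A ⟶ B) :
    homC₂ (f + g) = homC₂ f + homC₂ g := rfl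
@[simp] lemma homC₃_add {A B : ConfObj E} (f g : A ⟶ B) :
    homC₃ (f + g) = homC₃ f + homC₃ g := rfl

instance confPreadditive : Preadditive (ConfObj E) where
  homGroup A B := inferInstance
  add_comp A B D f f' g :=
    confHom_ext (by simp [Preadditive.add_comp]) (by simp [Preadditive.add_comp])
      (by simp [Preadditive.add_comp])
  comp_add A B D f g g' :=
    confHom_ext (by simp [Preadditive.comp_add]) (by simp [Preadditive.comp_add])
      (by simp [Preadditive.comp_add])

/-- The degree-wise class of conflations on `E(M)`: a short sequence of conflations is a
conflation if it is a conflation of `M` in each degree. -/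
def degConf (E : ExactStructure M) : ConfClass (ConfObj E) := fun _ _ _ f g =>
  E.conf (homC₁ f) (homC₁ g) ∧ E.conf (homC₂ f) (homC₂ g) ∧ E.conf (homC₃ f) (homC₃ g)

/-- The class `E₀`: degree-wise conflations splitting in degree `0`. -/
def degConf₀ (E : ExactStructure M) : ConfClass (ConfObj E) := fun _ _ _ f g =>
  degConf E f g ∧ Splits (homC₂ f) (homC₂ g)

/-- The class `E₀⁻¹`: degree-wise conflations splitting in degrees `-1` and `0`. -/
def degConf₀neg (E : ExactStructure M) : ConfClass (ConfObj E) := fun _ _ _ f g =>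
  degConf E f g ∧ Splits (homC₁ f) (homC₁ g) ∧ Splits (homC₂ f) (homC₂ g)

/-- The class `E₀¹`: degree-wise conflations splitting in degrees `0` and `1`. -/
def degConf₀pos (E : ExactStructure M) : ConfClass (ConfObj E) := fun _ _ _ f g =>
  degConf E f g ∧ Splits (homC₂ f) (homC₂ g) ∧ Splits (homC₃ f) (homC₃ g)

/-- The full subcategory `S(M)` of `E(M)` consisting of the split conflations. -/
def splitObjs (E : ExactStructure M) : Set (ConfObj E) :=
  {A | Splits A.i A.d}

end ConflationCategory


section AuxGeneric

variable {A : Type*} [Category A] [Preadditive A]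

lemma IsKernelOf.mono {K X Y : A} {k : K ⟶ X} {f : X ⟶ Y} (h : IsKernelOf k f) : Mono k := by
  constructor
  intro T x y hxy
  obtain ⟨t, -, huniq⟩ := h.2 (y ≫ k) (by rw [Category.assoc, h.1, comp_zero])
  exact (huniq x hxy).trans (huniq y rfl).symm

lemma IsCokernelOf.epi {X Y Q : A} {c : Y ⟶ Q} {f : X ⟶ Y} (h : IsCokernelOf c f) : Epi c := by
  constructor
  intro T x y hxy
  obtain ⟨t, -, huniq⟩ := h.2 (c ≫ y) (by rw [← Category.assoc, h.1, zero_comp])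
  exact (huniq x hxy).trans (huniq y rfl).symm

lemma IsKernelOf.hasKernel {K X Y : A} {k : K ⟶ X} {f : X ⟶ Y} (h : IsKernelOf k f) :
    HasKernel f :=
  HasLimit.mk ⟨_, KernelFork.IsLimit.ofι k h.1
    (fun g' hg' => (h.2 g' hg').exists.choose)
    (fun g' hg' => (h.2 g' hg').exists.choose_spec)
    (fun g' hg' m hm => (h.2 g' hg').unique hm (h.2 g' hg').exists.choose_spec)⟩

lemma IsCokernelOf.hasCokernel {X Y Q : A} {c : Y ⟶ Q} {f : X ⟶ Y} (h : IsCokernelOf c f) :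
    HasCokernel f :=
  HasColimit.mk ⟨_, CokernelCofork.IsColimit.ofπ c h.1
    (fun g' hg' => (h.2 g' hg').exists.choose)
    (fun g' hg' => (h.2 g' hg').exists.choose_spec)
    (fun g' hg' m hm => (h.2 g' hg').unique hm (h.2 g' hg').exists.choose_spec)⟩

lemma mono_comparison [HasKernels A] [HasCokernels A]
    {X Y I W : A} (f : X ⟶ Y) (q : X ⟶ I) (m : I ⟶ Y) (g : W ⟶ X)
    (hq : IsCokernelOf q g) (hm : Mono m) (hqm : q ≫ m = f) :
    Mono (Abelian.coimageImageComparison f) := by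
  have hκq : kernel.ι f ≫ q = 0 := by
    have h1 : (kernel.ι f ≫ q) ≫ m = 0 ≫ m := by
      rw [Category.assoc, hqm, kernel.condition, zero_comp]
    exact (cancel_mono m).mp h1
  have hqt : Abelian.coimage.π f ≫ cokernel.desc (kernel.ι f) q hκq = q :=
    cokernel.π_desc _ _ _
  set qt := cokernel.desc (kernel.ι f) q hκq with hqtdef
  have hgf : g ≫ f = 0 := by rw [← hqm, ← Category.assoc, hq.1, zero_comp]
  have hgπ : g ≫ Abelian.coimage.π f = 0 := by
    have h2 : g = kernel.lift f g hgf ≫ kernel.ι f := (kernel.lift_ι _ _ _).symm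
    rw [h2, Category.assoc]
    simp
  obtain ⟨pt, hpt, -⟩ := hq.2 (Abelian.coimage.π f) hgπ
  have epiq : Epi q := hq.epi
  have h1 : qt ≫ pt = 𝟙 _ := by
    have : Abelian.coimage.π f ≫ (qt ≫ pt) = Abelian.coimage.π f ≫ 𝟙 _ := by
      rw [← Category.assoc, hqt, hpt, Category.comp_id]
    exact (cancel_epi _).mp this
  have h2 : pt ≫ qt = 𝟙 _ := by
    have : q ≫ (pt ≫ qt) = q ≫ 𝟙 _ := by
      rw [← Category.assoc, hpt, hqt, Category.comp_id]
    exact (cancel_epi q).mp this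
  have hiso : IsIso qt := ⟨pt, h1, h2⟩
  have key : Abelian.coimageImageComparison f ≫ Abelian.image.ι f = qt ≫ m := by
    apply (cancel_epi (Abelian.coimage.π f)).mp
    rw [← Category.assoc, ← Category.assoc, hqt, Category.assoc, hqm]
    exact Abelian.coimage_image_factorisation f
  have : Mono (Abelian.coimageImageComparison f ≫ Abelian.image.ι f) := by
    rw [key]; exact mono_comp _ _
  exact mono_of_mono _ (Abelian.image.ι f)

lemma epi_comparison [HasKernels A] [HasCokernels A]
    {X Y I W : A} (f : X ⟶ Y) (e : X ⟶ I) (m : I ⟶ Y) (w : Y ⟶ W)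
    (hm : IsKernelOf m w) (he : Epi e) (hem : e ≫ m = f) :
    Epi (Abelian.coimageImageComparison f) := by
  have hmπ : m ≫ cokernel.π f = 0 := by
    have h1 : e ≫ (m ≫ cokernel.π f) = e ≫ 0 := by
      rw [← Category.assoc, hem, cokernel.condition, comp_zero]
    exact (cancel_epi e).mp h1
  have hmt : kernel.lift (cokernel.π f) m hmπ ≫ Abelian.image.ι f = m :=
    kernel.lift_ι _ _ _
  set mt := kernel.lift (cokernel.π f) m hmπ with hmtdef
  have hfw : f ≫ w = 0 := by rw [← hem, Category.assoc, hm.1, comp_zero]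
  have hιw : Abelian.image.ι f ≫ w = 0 := by
    have h2 : w = cokernel.π f ≫ cokernel.desc f w hfw := (cokernel.π_desc _ _ _).symm
    rw [h2, ← Category.assoc]
    simp
  obtain ⟨mh, hmh, -⟩ := hm.2 (Abelian.image.ι f) hιw
  have monom : Mono m := hm.mono
  have h1 : mt ≫ mh = 𝟙 _ := by
    have : (mt ≫ mh) ≫ m = 𝟙 _ ≫ m := by
      rw [Category.assoc, hmh, hmt, Category.id_comp]
    exact (cancel_mono m).mp this
  have h2 : mh ≫ mt = 𝟙 _ := by
    have : (mh ≫ mt) ≫ Abelian.image.ι f = 𝟙 _ ≫ Abelian.image.ι f := by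
      rw [Category.assoc, hmt, hmh, Category.id_comp]
    exact (cancel_mono (Abelian.image.ι f)).mp this
  have hiso : IsIso mt := ⟨mh, h1, h2⟩
  have key : Abelian.coimage.π f ≫ Abelian.coimageImageComparison f = e ≫ mt := by
    apply (cancel_mono (Abelian.image.ι f)).mp
    rw [Category.assoc e mt (Abelian.image.ι f), hmt, hem, Category.assoc]
    exact Abelian.coimage_image_factorisation f
  have : Epi (Abelian.coimage.π f ≫ Abelian.coimageImageComparison f) := by
    rw [key]; exact epi_comp _ _
  exact epi_of_epi (Abelian.coimage.π f) _

end AuxGeneric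

section AuxQuot

variable {C : Type u} [Category.{v} C] [Preadditive C]

lemma FactorsThru.zero' (P : Set C) (hne : P.Nonempty) (X Y : C) :
    FactorsThru P (0 : X ⟶ Y) := by
  obtain ⟨Z, hZ⟩ := hne
  exact ⟨Z, hZ, 0, 0, by simp⟩

lemma FactorsThru.neg' {P : Set C} {X Y : C} {f : X ⟶ Y} (h : FactorsThru P f) :
    FactorsThru P (-f) := by
  obtain ⟨Z, hZ, g, k, rfl⟩ := h
  exact ⟨Z, hZ, -g, k, by simp⟩

lemma FactorsThru.add' [HasBinaryBiproducts C] {P : Set C} (hP : IsAddSubcat P) {X Y : C}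
    {f₁ f₂ : X ⟶ Y} (h₁ : FactorsThru P f₁) (h₂ : FactorsThru P f₂) :
    FactorsThru P (f₁ + f₂) := by
  obtain ⟨Z₁, hZ₁, g₁, k₁, rfl⟩ := h₁
  obtain ⟨Z₂, hZ₂, g₂, k₂, rfl⟩ := h₂
  exact ⟨Z₁ ⊞ Z₂, hP.sumClosed hZ₁ hZ₂, biprod.lift g₁ g₂, biprod.desc k₁ k₂, by simp⟩

lemma FactorsThru.precomp {P : Set C} {X Y Z : C} {f : Y ⟶ Z} (h : FactorsThru P f)
    (g : X ⟶ Y) : FactorsThru P (g ≫ f) := by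
  obtain ⟨W, hW, a, b, rfl⟩ := h
  exact ⟨W, hW, g ≫ a, b, by rw [Category.assoc]⟩

lemma FactorsThru.postcomp {P : Set C} {X Y Z : C} {f : X ⟶ Y} (h : FactorsThru P f)
    (g : Y ⟶ Z) : FactorsThru P (f ≫ g) := by
  obtain ⟨W, hW, a, b, rfl⟩ := h
  exact ⟨W, hW, a, b ≫ g, by rw [Category.assoc]⟩

/-- For a full additive subcategory, the factor ideal is just the set of morphisms
factoring through an object of `P`. -/
lemma mem_factorIdeal_iff [HasBinaryBiproducts C] {P : Set C} (hP : IsAddSubcat P)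
    {X Y : C} (f : X ⟶ Y) : f ∈ factorIdeal P X Y ↔ FactorsThru P f := by
  constructor
  · intro hf
    let S : AddSubgroup (X ⟶ Y) :=
      { carrier := {g | FactorsThru P g}
        zero_mem' := FactorsThru.zero' P hP.nonempty X Y
        add_mem' := fun h₁ h₂ => FactorsThru.add' hP h₁ h₂
        neg_mem' := fun h => FactorsThru.neg' h }
    exact (AddSubgroup.closure_le S).mpr (fun g hg => hg) hf
  · exact fun h => AddSubgroup.subset_closure h

variable (P : Set C)

lemma qmap_comp {X Y Z : C} (f : X ⟶ Y) (g : Y ⟶ Z) :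
    qmap P (f ≫ g) = qmap P f ≫ qmap P g := rfl

lemma qmap_zero {X Y : C} : qmap P (0 : X ⟶ Y) = 0 := rfl

lemma qmap_add {X Y : C} (f g : X ⟶ Y) : qmap P (f + g) = qmap P f + qmap P g := rfl

lemma qmap_surj {X Y : C} (φ : (QuotObj.mk X : QuotObj P) ⟶ QuotObj.mk Y) :
    ∃ f : X ⟶ Y, qmap P f = φ :=
  Quotient.exists_rep φ

variable {P}

lemma qmap_eq_zero_iff [HasBinaryBiproducts C] (hP : IsAddSubcat P) {X Y : C} {f : X ⟶ Y} :
    qmap P f = 0 ↔ FactorsThru P f :=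
  (QuotientAddGroup.eq_zero_iff f).trans (mem_factorIdeal_iff hP f)

lemma qmap_eq_iff [HasBinaryBiproducts C] (hP : IsAddSubcat P) {X Y : C} {f g : X ⟶ Y} :
    qmap P f = qmap P g ↔ FactorsThru P (g - f) := by
  rw [show (qmap P f = qmap P g) ↔ (qmap P (g - f) = 0) from ?_]
  · exact qmap_eq_zero_iff hP
  constructor
  · intro h
    have : qmap P (g - f) = qmap P g - qmap P f := rfl
    rw [this, h, sub_self]
  · intro h
    have h2 : qmap P g - qmap P f = 0 := h
    rw [sub_eq_zero] at h2
    exact h2.symm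

lemma quot_mono_of [HasBinaryBiproducts C] (hP : IsAddSubcat P) {Z W : C} (h : Z ⟶ W)
    (hyp : ∀ (T : C) (s : T ⟶ Z), FactorsThru P (s ≫ h) → FactorsThru P s) :
    Mono (qmap P h) := by
  constructor
  intro T u v huv
  rcases T with ⟨T₀⟩
  obtain ⟨s₁, rfl⟩ := qmap_surj P u
  obtain ⟨s₂, rfl⟩ := qmap_surj P v
  rw [← qmap_comp, ← qmap_comp, qmap_eq_iff hP, ← Preadditive.sub_comp] at huv
  exact (qmap_eq_iff hP).mpr (hyp T₀ (s₂ - s₁) huv)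

lemma quot_epi_of [HasBinaryBiproducts C] (hP : IsAddSubcat P) {Z W : C} (h : Z ⟶ W)
    (hyp : ∀ (T : C) (s : W ⟶ T), FactorsThru P (h ≫ s) → FactorsThru P s) :
    Epi (qmap P h) := by
  constructor
  intro T u v huv
  rcases T with ⟨T₀⟩
  obtain ⟨s₁, rfl⟩ := qmap_surj P u
  obtain ⟨s₂, rfl⟩ := qmap_surj P v
  rw [← qmap_comp, ← qmap_comp, qmap_eq_iff hP, ← Preadditive.comp_sub] at huv
  exact (qmap_eq_iff hP).mpr (hyp T₀ (s₂ - s₁) huv)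

end AuxQuot

section AuxExact

variable {M : Type u} [Category.{v} M] [Preadditive M]

/-- Two kernels of the same morphism: transport membership in a conflation. -/
lemma conf_swap_kernel (E : ExactStructure M) {W P₁ X Y : M} {i : W ⟶ X} {d : X ⟶ Y}
    {j : P₁ ⟶ X} (hconf : E.conf i d) (hj : IsKernelOf j d) : E.conf j d := by
  have hki := E.ker_of_conf hconf
  obtain ⟨w, hw, -⟩ := hj.2 i hki.1
  obtain ⟨w', hw', -⟩ := hki.2 j hj.1
  have monoi : Mono i := hki.mono
  have monoj : Mono j := hj.mono
  have h1 : w ≫ w' = 𝟙 W := by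
    have : (w ≫ w') ≫ i = 𝟙 W ≫ i := by
      rw [Category.assoc, hw', hw, Category.id_comp]
    exact (cancel_mono i).mp this
  have h2 : w' ≫ w = 𝟙 P₁ := by
    have : (w' ≫ w) ≫ j = 𝟙 P₁ ≫ j := by
      rw [Category.assoc, hw, hw', Category.id_comp]
    exact (cancel_mono j).mp this
  exact E.isoClosed ⟨w, w', h1, h2⟩ (Iso.refl _) (Iso.refl _)
    (by simpa using hw.symm) (by simp) hconf

/-- Two cokernels of the same morphism: transport membership in a conflation. -/
lemma conf_swap_cokernel (E : ExactStructure M) {X Y W Q : M} {i : X ⟶ Y} {d : Y ⟶ W}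
    {u : Y ⟶ Q} (hconf : E.conf i d) (hu : IsCokernelOf u i) : E.conf i u := by
  have hco := E.coker_of_conf hconf
  obtain ⟨θ, hθ, -⟩ := hco.2 u hu.1
  obtain ⟨θ', hθ', -⟩ := hu.2 d hco.1
  have epid : Epi d := hco.epi
  have epiu : Epi u := hu.epi
  have h1 : θ ≫ θ' = 𝟙 W := by
    have : d ≫ (θ ≫ θ') = d ≫ 𝟙 W := by
      rw [← Category.assoc, hθ, hθ', Category.comp_id]
    exact (cancel_epi d).mp this
  have h2 : θ' ≫ θ = 𝟙 Q := by
    have : u ≫ (θ' ≫ θ) = u ≫ 𝟙 Q := by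
      rw [← Category.assoc, hθ', hθ, Category.comp_id]
    exact (cancel_epi u).mp this
  exact E.isoClosed (Iso.refl _) (Iso.refl _) ⟨θ, θ', h1, h2⟩
    (by simp) (by simpa using hθ) hconf

/-- Pull back a conflation `P₁ → P₀ → Y` along `w : X → Y`. -/
lemma pk_exists (E : ExactStructure M) {P₁ P₀ Y : M} {ι : P₁ ⟶ P₀} {p : P₀ ⟶ Y}
    (hconf : E.conf ι p) {X : M} (w : X ⟶ Y) :
    ∃ (K : M) (k : K ⟶ X) (π : K ⟶ P₀) (κ : P₁ ⟶ K),
      IsPullback π k p w ∧ κ ≫ π = ι ∧ κ ≫ k = 0 ∧ IsKernelOf κ k ∧ E.conf κ k := by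
  obtain ⟨K, k, π, ⟨W₀, i₀, hconf₀⟩, hpb⟩ := E.defl_pullback p ⟨P₁, ι, hconf⟩ w
  have hιp : ι ≫ p = 0 := (E.ker_of_conf hconf).1
  set κ := hpb.lift ι 0 (by rw [hιp, zero_comp]) with hκdef
  have hκπ : κ ≫ π = ι := hpb.lift_fst _ _ _
  have hκk : κ ≫ k = 0 := hpb.lift_snd _ _ _
  have hker : IsKernelOf κ k := by
    refine ⟨hκk, ?_⟩
    intro T t ht
    have h1 : (t ≫ π) ≫ p = 0 := by
      rw [Category.assoc, hpb.w, ← Category.assoc, ht, zero_comp]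
    obtain ⟨τ, hτ, hτu⟩ := (E.ker_of_conf hconf).2 (t ≫ π) h1
    refine ⟨τ, ?_, ?_⟩
    · apply hpb.hom_ext
      · rw [Category.assoc, hκπ, hτ]
      · rw [Category.assoc, hκk, comp_zero, ht]
    · intro y hy
      apply hτu
      rw [← hκπ, ← Category.assoc, hy]
  exact ⟨K, k, π, κ, hpb, hκπ, hκk, hker, conf_swap_kernel E hconf₀ hker⟩

/-- Push out a conflation `X → Q⁰ → Q¹` along `w : X → Z`. -/
lemma pc_exists (E : ExactStructure M) {X Q0 Q1 : M} {a : X ⟶ Q0} {q : Q0 ⟶ Q1}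
    (hconf : E.conf a q) {Z : M} (w : X ⟶ Z) :
    ∃ (D : M) (c : Z ⟶ D) (g : Q0 ⟶ D) (u : D ⟶ Q1),
      IsPushout a w g c ∧ g ≫ u = q ∧ c ≫ u = 0 ∧ IsCokernelOf u c ∧ E.conf c u := by
  obtain ⟨D, c, g, ⟨W₀, d₀, hconf₀⟩, hpo⟩ := E.infl_pushout a ⟨Q1, q, hconf⟩ w
  have haq : a ≫ q = 0 := (E.ker_of_conf hconf).1
  set u := hpo.desc q 0 (by rw [haq, comp_zero]) with hudef
  have hgu : g ≫ u = q := hpo.inl_desc _ _ _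
  have hcu : c ≫ u = 0 := hpo.inr_desc _ _ _
  have hcoker : IsCokernelOf u c := by
    refine ⟨hcu, ?_⟩
    intro T t ht
    have h1 : a ≫ (g ≫ t) = 0 := by
      rw [← Category.assoc, hpo.w, Category.assoc, ht, comp_zero]
    obtain ⟨τ, hτ, hτu⟩ := (E.coker_of_conf hconf).2 (g ≫ t) h1
    refine ⟨τ, ?_, ?_⟩
    · apply hpo.hom_ext
      · rw [← Category.assoc, hgu, hτ]
      · rw [← Category.assoc, hcu, zero_comp, ht]
    · intro y hy
      apply hτu
      rw [← hgu, Category.assoc, hy]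
  exact ⟨D, c, g, u, hpo, hgu, hcu, hcoker, conf_swap_cokernel E hconf₀ hcoker⟩

end AuxExact

section AuxQuotKer

variable {M : Type u} [Category.{v} M] [Preadditive M] [HasBinaryBiproducts M]

/-- Lifting along the pulled-back precover. -/
lemma pk_lift {P : Set M} {P₀ Y : M} {p : P₀ ⟶ Y}
    (hprec : IsPrecover P p) {X : M} {w : X ⟶ Y} {K : M} {k : K ⟶ X} {π : K ⟶ P₀}
    (hpb : IsPullback π k p w) {T : M} (t : T ⟶ X) (h : FactorsThru P (t ≫ w)) :
    ∃ s : T ⟶ K, s ≫ k = t := by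
  obtain ⟨Q, hQ, aq, b, hab⟩ := h
  obtain ⟨b', hb'⟩ := hprec.2 Q hQ b
  refine ⟨hpb.lift (aq ≫ b') t ?_, hpb.lift_snd _ _ _⟩
  rw [Category.assoc, hb', hab]

/-- The pulled-back precover is a kernel in the quotient category. -/
lemma quot_kernel {P : Set M} (hP : IsAddSubcat P) (E : ExactStructure M)
    {P₁ P₀ Y : M} {ι : P₁ ⟶ P₀} {p : P₀ ⟶ Y}
    (hP₀ : P₀ ∈ P) (hP₁ : P₁ ∈ P) (hprec : IsPrecover P p)
    {X : M} (w : X ⟶ Y) {K : M} {k : K ⟶ X} {π : K ⟶ P₀} {κ : P₁ ⟶ K}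
    (hpb : IsPullback π k p w) (hκπ : κ ≫ π = ι) (hκk : κ ≫ k = 0)
    (hker : IsKernelOf κ k) :
    Mono (qmap P k) ∧ IsKernelOf (qmap P k) (qmap P w) := by
  have monoq : Mono (qmap P k) := by
    apply quot_mono_of hP
    intro T s hs
    obtain ⟨Q, hQ, aq, b, hab⟩ := hs
    obtain ⟨b', hb'⟩ := pk_lift hprec hpb b ⟨Q, hQ, 𝟙 Q, b ≫ w, by rw [Category.id_comp]⟩
    have h0 : (s - aq ≫ b') ≫ k = 0 := by
      rw [Preadditive.sub_comp, Category.assoc, hb', hab, sub_self]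
    obtain ⟨d, hd, -⟩ := hker.2 _ h0
    have hs' : s = aq ≫ b' + d ≫ κ := by rw [hd]; abel
    rw [hs']
    exact FactorsThru.add' hP ⟨Q, hQ, aq, b', rfl⟩ ⟨P₁, hP₁, d, κ, rfl⟩
  refine ⟨monoq, ?_, ?_⟩
  · rw [← qmap_comp, ← hpb.w]
    exact (qmap_eq_zero_iff hP).mpr ((FactorsThru.precomp ⟨P₀, hP₀, 𝟙 P₀, p, by simp⟩ π))
  · intro T g hg
    rcases T with ⟨T₀⟩
    obtain ⟨t, rfl⟩ := qmap_surj P g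
    rw [← qmap_comp] at hg
    have hft : FactorsThru P (t ≫ w) := (qmap_eq_zero_iff hP).mp hg
    obtain ⟨s, hs⟩ := pk_lift hprec hpb t hft
    refine ⟨qmap P s, by show qmap P s ≫ qmap P k = qmap P t; rw [← qmap_comp, hs], ?_⟩
    intro y hy
    have : y ≫ qmap P k = qmap P s ≫ qmap P k := by
      rw [hy, ← qmap_comp, hs]
    exact (cancel_mono (qmap P k)).mp this

/-- Extension along the pushed-out preenvelope. -/
lemma pc_desc {P : Set M} {X Q0 : M} {a : X ⟶ Q0}
    (henv : IsPreenvelope P a) {Z : M} {w : X ⟶ Z} {D : M} {c : Z ⟶ D} {g : Q0 ⟶ D}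
    (hpo : IsPushout a w g c) {T : M} (t : Z ⟶ T) (h : FactorsThru P (w ≫ t)) :
    ∃ s : D ⟶ T, c ≫ s = t := by
  obtain ⟨Q, hQ, aq, b, hab⟩ := h
  obtain ⟨a', ha'⟩ := henv.2 Q hQ aq
  refine ⟨hpo.desc (a' ≫ b) t ?_, hpo.inr_desc _ _ _⟩
  rw [← Category.assoc, ha', hab]

/-- The pushed-out preenvelope is a cokernel in the quotient category. -/
lemma quot_cokernel {P : Set M} (hP : IsAddSubcat P) (E : ExactStructure M)
    {X Q0 Q1 : M} {a : X ⟶ Q0} {q : Q0 ⟶ Q1}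
    (hQ0 : Q0 ∈ P) (hQ1 : Q1 ∈ P) (henv : IsPreenvelope P a)
    {Z : M} (w : X ⟶ Z) {D : M} {c : Z ⟶ D} {g : Q0 ⟶ D} {u : D ⟶ Q1}
    (hpo : IsPushout a w g c) (hgu : g ≫ u = q) (hcu : c ≫ u = 0)
    (hcoker : IsCokernelOf u c) :
    Epi (qmap P c) ∧ IsCokernelOf (qmap P c) (qmap P w) := by
  have epiq : Epi (qmap P c) := by
    apply quot_epi_of hP
    intro T s hs
    obtain ⟨Q, hQ, aq, b, hab⟩ := hs
    obtain ⟨a', ha'⟩ := pc_desc henv hpo aq ⟨Q, hQ, w ≫ aq, 𝟙 Q, by rw [Category.comp_id]⟩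
    have h0 : c ≫ (s - a' ≫ b) = 0 := by
      rw [Preadditive.comp_sub, ← Category.assoc, ha', hab, sub_self]
    obtain ⟨d, hd, -⟩ := hcoker.2 _ h0
    have hs' : s = a' ≫ b + u ≫ d := by rw [hd]; abel
    rw [hs']
    exact FactorsThru.add' hP ⟨Q, hQ, a', b, rfl⟩ ⟨Q1, hQ1, u, d, rfl⟩
  refine ⟨epiq, ?_, ?_⟩
  · rw [← qmap_comp, ← hpo.w]
    exact (qmap_eq_zero_iff hP).mpr ((FactorsThru.postcomp ⟨Q0, hQ0, a, 𝟙 Q0, by simp⟩ g))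
  · intro T g' hg'
    rcases T with ⟨T₀⟩
    obtain ⟨t, rfl⟩ := qmap_surj P g'
    rw [← qmap_comp] at hg'
    have hft : FactorsThru P (w ≫ t) := (qmap_eq_zero_iff hP).mp hg'
    obtain ⟨s, hs⟩ := pc_desc henv hpo t hft
    refine ⟨qmap P s, by show qmap P c ≫ qmap P s = qmap P t; rw [← qmap_comp, hs], ?_⟩
    intro y hy
    have : qmap P c ≫ y = qmap P c ≫ qmap P s := by
      rw [hy, ← qmap_comp, hs]
    exact (cancel_epi (qmap P c)).mp this

end AuxQuotKer

section MainSides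

variable {M : Type u} [Category.{v} M] [Preadditive M] [HasBinaryBiproducts M]

lemma monoSide (E : ExactStructure M) {P : Set M} (hP : IsAddSubcat P)
    (hpct : PseudoClusterTilting E.conf P) {X Y : M} (f : X ⟶ Y) :
    ∃ (K D : M) (k : K ⟶ X) (c : X ⟶ D) (hm : D ⟶ Y),
      IsKernelOf (qmap P k) (qmap P f) ∧ IsCokernelOf (qmap P c) (qmap P k) ∧
      qmap P c ≫ qmap P hm = qmap P f ∧ Mono (qmap P hm) := by
  obtain ⟨P₀, P₁, ι, p, hconfp, hP₀, hP₁, hprec⟩ := hpct.2.2 Y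
  obtain ⟨K, k, π, κ, hpb, hκπ, hκk, hker, hconfκ⟩ := pk_exists E hconfp f
  obtain ⟨Q0, Q1, a, q, hconfa, hQ0, hQ1, henv⟩ := hpct.1.2 K
  obtain ⟨D, c, g, u, hpo, hgu, hcu, hucoker, hconfc⟩ := pc_exists E hconfa k
  obtain ⟨π', hπ'⟩ := henv.2 P₀ hP₀ π
  -- the induced morphism h : D ⟶ Y
  have hcomm : a ≫ (π' ≫ p) = k ≫ f := by
    rw [← Category.assoc, hπ', hpb.w]
  set hm := hpo.desc (π' ≫ p) f hcomm with hmdef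
  have hgh : g ≫ hm = π' ≫ p := hpo.inl_desc _ _ _
  have hch : c ≫ hm = f := hpo.inr_desc _ _ _
  -- the quotient kernel and cokernel
  obtain ⟨monok, kerk⟩ := quot_kernel hP E hP₀ hP₁ hprec f hpb hκπ hκk hker
  obtain ⟨epic, cokerc⟩ := quot_cokernel hP E hQ0 hQ1 henv k hpo hgu hcu hucoker
  refine ⟨K, D, k, c, hm, kerk, cokerc, by rw [← qmap_comp, hch], ?_⟩
  -- ============ Mono (qmap P hm) ============
  -- pull the precover conflation back along hm
  obtain ⟨Ee, e, ρ, κE, hpbE, hκEρ, hκEe, hkerE, hconfκE⟩ := pk_exists E hconfp hm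
  have hcu_ker : IsKernelOf c u := E.ker_of_conf hconfc
  have monoc : Mono c := hcu_ker.mono
  -- v := e ≫ u is a deflation
  obtain ⟨Wv, iv, hconfv⟩ := E.defl_comp e u ⟨_, _, hconfκE⟩ ⟨_, _, hconfc⟩
  -- j and m₁
  have hjcomm : π ≫ p = (k ≫ c) ≫ hm := by
    rw [Category.assoc, hch, hpb.w]
  set j := hpbE.lift π (k ≫ c) hjcomm with hjdef
  have hjρ : j ≫ ρ = π := hpbE.lift_fst _ _ _
  have hje : j ≫ e = k ≫ c := hpbE.lift_snd _ _ _
  set m₁ := hpbE.lift π' g hgh.symm with hm₁def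
  have hm₁ρ : m₁ ≫ ρ = π' := hpbE.lift_fst _ _ _
  have hm₁e : m₁ ≫ e = g := hpbE.lift_snd _ _ _
  have ham₁ : a ≫ m₁ = j := by
    apply hpbE.hom_ext
    · rw [Category.assoc, hm₁ρ, hπ', hjρ]
    · rw [Category.assoc, hm₁e, hpo.w, hje]
  -- j is a kernel of v := e ≫ u
  have hjv : j ≫ (e ≫ u) = 0 := by
    rw [← Category.assoc, hje, Category.assoc, hcu, comp_zero]
  have hkerj : IsKernelOf j (e ≫ u) := by
    refine ⟨hjv, ?_⟩
    intro T t ht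
    have h1 : (t ≫ e) ≫ u = 0 := by rw [Category.assoc, ht]
    obtain ⟨t', ht', -⟩ := hcu_ker.2 (t ≫ e) h1
    have hcomm2 : (t ≫ ρ) ≫ p = t' ≫ f := by
      rw [Category.assoc, hpbE.w, ← Category.assoc, ← ht', Category.assoc, hch]
    set τ := hpb.lift (t ≫ ρ) t' hcomm2 with hτdef
    have hτπ : τ ≫ π = t ≫ ρ := hpb.lift_fst _ _ _
    have hτk : τ ≫ k = t' := hpb.lift_snd _ _ _
    have hτj : τ ≫ j = t := by
      apply hpbE.hom_ext
      · rw [Category.assoc, hjρ, hτπ]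
      · rw [Category.assoc, hje, ← Category.assoc, hτk, ht']
    refine ⟨τ, hτj, ?_⟩
    intro y hy
    apply hpb.hom_ext
    · rw [hτπ, ← hy, Category.assoc, hjρ]
    · rw [hτk]
      apply (cancel_mono c).mp
      rw [Category.assoc, ← hje, ← Category.assoc, hy, ht']
  have monoj : Mono j := hkerj.mono
  -- the pullback A of v along q
  obtain ⟨A, pA, gA, ⟨WA, iA, hconfA⟩, hpbA⟩ := E.defl_pullback (e ≫ u) ⟨_, _, hconfv⟩ q
  -- hpbA : IsPullback gA pA (e ≫ u) q
  have hm₁v : m₁ ≫ (e ≫ u) = 𝟙 Q0 ≫ q := by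
    rw [← Category.assoc, hm₁e, hgu, Category.id_comp]
  set σ := hpbA.lift m₁ (𝟙 Q0) hm₁v with hσdef
  have hσgA : σ ≫ gA = m₁ := hpbA.lift_fst _ _ _
  have hσpA : σ ≫ pA = 𝟙 Q0 := hpbA.lift_snd _ _ _
  set κA := hpbA.lift j 0 (by rw [hjv, zero_comp]) with hκAdef
  have hκAgA : κA ≫ gA = j := hpbA.lift_fst _ _ _
  have hκApA : κA ≫ pA = 0 := hpbA.lift_snd _ _ _
  have hka : IsKernelOf κA pA := by
    refine ⟨hκApA, ?_⟩
    intro T t ht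
    have h1 : (t ≫ gA) ≫ (e ≫ u) = 0 := by
      rw [Category.assoc, hpbA.w, ← Category.assoc, ht, zero_comp]
    obtain ⟨τ, hτ, -⟩ := hkerj.2 (t ≫ gA) h1
    refine ⟨τ, ?_, ?_⟩
    · apply hpbA.hom_ext
      · rw [Category.assoc, hκAgA, hτ]
      · rw [Category.assoc, hκApA, comp_zero, ht]
    · intro y hy
      apply (cancel_mono j).mp
      rw [hτ, ← hy, Category.assoc, hκAgA]
  have monoκA : Mono κA := hka.mono
  -- splitting data
  set ε := 𝟙 A - pA ≫ σ with hεdef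
  have hεpA : ε ≫ pA = 0 := by
    rw [hεdef, Preadditive.sub_comp, Category.id_comp, Category.assoc, hσpA,
      Category.comp_id, sub_self]
  obtain ⟨r, hr, -⟩ := hka.2 ε hεpA
  have hκAε : κA ≫ ε = κA := by
    rw [hεdef, Preadditive.comp_sub, Category.comp_id, ← Category.assoc, hκApA, zero_comp,
      sub_zero]
  have hκAr : κA ≫ r = 𝟙 K := by
    apply (cancel_mono κA).mp
    rw [Category.assoc, hr, hκAε, Category.id_comp]
  have hσr : σ ≫ r = 0 := by
    apply (cancel_mono κA).mp
    rw [Category.assoc, hr, zero_comp, hεdef, Preadditive.comp_sub, Category.comp_id,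
      ← Category.assoc, hσpA, Category.id_comp, sub_self]
  -- λ
  have haq : a ≫ q = 0 := (E.ker_of_conf hconfa).1
  set lam := hpbA.lift 0 a (by rw [zero_comp, haq]) with hlamdef
  have hlamgA : lam ≫ gA = 0 := hpbA.lift_fst _ _ _
  have hlampA : lam ≫ pA = a := hpbA.lift_snd _ _ _
  have hdecompA : 𝟙 A = r ≫ κA + pA ≫ σ := by rw [hr, hεdef]; abel
  have monoa : Mono a := (E.ker_of_conf hconfa).mono
  have hlamr : lam ≫ r = -𝟙 K := by
    have hlam2 : lam = (lam ≫ r) ≫ κA + a ≫ σ := by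
      conv_lhs => rw [← Category.comp_id lam, hdecompA]
      rw [Preadditive.comp_add, ← Category.assoc, ← Category.assoc, hlampA]
    have h2 : (lam ≫ r) ≫ j + j = 0 := by
      have h3 : (lam ≫ r) ≫ j + a ≫ m₁ = lam ≫ gA := by
        conv_rhs => rw [hlam2]
        simp only [Preadditive.add_comp, Category.assoc, hκAgA, hσgA]
      rw [ham₁, hlamgA] at h3
      exact h3
    have h2' : ((lam ≫ r) + 𝟙 K) ≫ j = 0 := by
      rw [Preadditive.add_comp, Category.id_comp]
      exact h2
    have h4 : ((lam ≫ r) + 𝟙 K) = 0 := by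
      apply (cancel_mono j).mp
      rw [h2', zero_comp]
    have := eq_neg_of_add_eq_zero_left h4
    rw [this]
  have hkerlam : IsKernelOf lam gA := by
    refine ⟨hlamgA, ?_⟩
    intro T t ht
    have h1 : (t ≫ pA) ≫ q = 0 := by
      rw [Category.assoc, ← hpbA.w, ← Category.assoc, ht, zero_comp]
    obtain ⟨t₁, ht₁, -⟩ := (E.ker_of_conf hconfa).2 (t ≫ pA) h1
    have hδ : (t - t₁ ≫ lam) ≫ pA = 0 := by
      rw [Preadditive.sub_comp, Category.assoc, hlampA, ht₁, sub_self]
    obtain ⟨d, hd, -⟩ := hka.2 _ hδ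
    have hdj : d ≫ j = 0 := by
      have h3 : d ≫ κA ≫ gA = (t - t₁ ≫ lam) ≫ gA := by rw [← Category.assoc, hd]
      rw [hκAgA] at h3
      rw [h3, Preadditive.sub_comp, Category.assoc, hlamgA, comp_zero, sub_zero, ht]
    have hd0 : d = 0 := by
      apply (cancel_mono j).mp
      rw [hdj, zero_comp]
    have ht2 : t = t₁ ≫ lam := by
      have := hd
      rw [hd0, zero_comp] at this
      have := sub_eq_zero.mp this.symm
      exact this
    refine ⟨t₁, ht2.symm, ?_⟩
    intro y hy
    apply (cancel_mono a).mp
    rw [ht₁, ← hy, Category.assoc, hlampA]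
  have monolam : Mono lam := hkerlam.mono
  -- the second pullback A₂ and the isomorphism θ
  obtain ⟨A₂, p₂, g₂, ⟨W₂, i₂, hconf₂⟩, hpb₂⟩ := E.defl_pullback q ⟨_, _, hconfa⟩ (e ≫ u)
  -- hpb₂ : IsPullback g₂ p₂ q (e ≫ u)
  set θ := hpb₂.lift pA gA hpbA.w.symm with hθdef
  have hθg₂ : θ ≫ g₂ = pA := hpb₂.lift_fst _ _ _
  have hθp₂ : θ ≫ p₂ = gA := hpb₂.lift_snd _ _ _
  set θ' := hpbA.lift p₂ g₂ hpb₂.w.symm with hθ'def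
  have hθ'gA : θ' ≫ gA = p₂ := hpbA.lift_fst _ _ _
  have hθ'pA : θ' ≫ pA = g₂ := hpbA.lift_snd _ _ _
  have hθθ' : θ ≫ θ' = 𝟙 A := by
    apply hpbA.hom_ext
    · rw [Category.assoc, hθ'gA, hθp₂, Category.id_comp]
    · rw [Category.assoc, hθ'pA, hθg₂, Category.id_comp]
  have hθ'θ : θ' ≫ θ = 𝟙 A₂ := by
    apply hpb₂.hom_ext
    · rw [Category.assoc, hθg₂, hθ'pA, Category.id_comp]
    · rw [Category.assoc, hθp₂, hθ'gA, Category.id_comp]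
  have epip₂ : Epi p₂ := (E.coker_of_conf hconf₂).epi
  have epigA : Epi gA := by
    have : Epi (θ ≫ p₂) := by
      have : IsIso θ := ⟨θ', hθθ', hθ'θ⟩
      exact epi_comp _ _
    rwa [hθp₂] at this
  have hcoker_gA : IsCokernelOf gA lam := by
    refine ⟨hlamgA, ?_⟩
    intro T t ht
    have h1 : (i₂ ≫ θ') ≫ gA = 0 := by
      rw [Category.assoc, hθ'gA, (E.ker_of_conf hconf₂).1]
    obtain ⟨wlam, hwlam, -⟩ := hkerlam.2 (i₂ ≫ θ') h1
    have h2 : i₂ ≫ (θ' ≫ t) = 0 := by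
      rw [← Category.assoc, ← hwlam, Category.assoc, ht, comp_zero]
    obtain ⟨s, hs, -⟩ := (E.coker_of_conf hconf₂).2 (θ' ≫ t) h2
    have hfac : gA ≫ s = t := by
      rw [← hθp₂, Category.assoc, hs, ← Category.assoc, hθθ', Category.id_comp]
    refine ⟨s, hfac, ?_⟩
    intro y hy
    apply (cancel_epi gA).mp
    rw [hy, hfac]
  -- the inverse n of m₁
  have hlam_t : lam ≫ (pA + r ≫ a) = 0 := by
    rw [Preadditive.comp_add, hlampA, ← Category.assoc, hlamr, Preadditive.neg_comp,
      Category.id_comp, add_neg_cancel]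
  obtain ⟨n, hn, -⟩ := hcoker_gA.2 (pA + r ≫ a) hlam_t
  have hm₁n : m₁ ≫ n = 𝟙 Q0 := by
    rw [← hσgA, Category.assoc, hn, Preadditive.comp_add, hσpA, ← Category.assoc, hσr,
      zero_comp, add_zero]
  have hnm₁ : n ≫ m₁ = 𝟙 Ee := by
    apply (cancel_epi gA).mp
    rw [← Category.assoc, hn, Preadditive.add_comp, Category.assoc, ham₁, ← hκAgA,
      ← Category.assoc (f := r), hr, hεdef, Preadditive.sub_comp, Category.id_comp,
      Category.assoc, hσgA, Category.comp_id]
    abel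
  have he_fact : e = n ≫ g := by
    have h5 : (n ≫ m₁) ≫ e = n ≫ g := by rw [Category.assoc, hm₁e]
    rw [hnm₁, Category.id_comp] at h5
    exact h5
  -- conclude
  apply quot_mono_of hP
  intro T s hs
  obtain ⟨Q', hQ', aq, b, hab⟩ := hs
  obtain ⟨b', hb'⟩ := hprec.2 Q' hQ' b
  set wlift := hpbE.lift (aq ≫ b') s (by rw [Category.assoc, hb', hab]) with hwdef
  have hwe : wlift ≫ e = s := hpbE.lift_snd _ _ _
  have : s = (wlift ≫ n) ≫ g := by rw [Category.assoc, ← he_fact, hwe]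
  rw [this]
  exact ⟨Q0, hQ0, wlift ≫ n, g, rfl⟩

lemma epiSide (E : ExactStructure M) {P : Set M} (hP : IsAddSubcat P)
    (hpct : PseudoClusterTilting E.conf P) {X Y : M} (f : X ⟶ Y) :
    ∃ (Cc I : M) (cY : Y ⟶ Cc) (m : I ⟶ Y) (et : X ⟶ I),
      IsCokernelOf (qmap P cY) (qmap P f) ∧ IsKernelOf (qmap P m) (qmap P cY) ∧
      qmap P et ≫ qmap P m = qmap P f ∧ Epi (qmap P et) := by
  obtain ⟨Q0, Q1, a, q, hconfa, hQ0, hQ1, henv⟩ := hpct.1.2 X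
  obtain ⟨Cc, c, g, u, hpo, hgu, hcu, hucoker, hconfc⟩ := pc_exists E hconfa f
  obtain ⟨P₀, P₁, ι, p, hconfp, hP₀, hP₁, hprec⟩ := hpct.2.2 Cc
  obtain ⟨I, m, π, κ, hpb, hκπ, hκm, hker, hconfκ⟩ := pk_exists E hconfp c
  obtain ⟨g₂, hg₂⟩ := hprec.2 Q0 hQ0 g
  -- the induced morphism et : X ⟶ I
  have hcomm : (a ≫ g₂) ≫ p = f ≫ c := by
    rw [Category.assoc, hg₂, hpo.w]
  set et := hpb.lift (a ≫ g₂) f hcomm with hetdef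
  have hetπ : et ≫ π = a ≫ g₂ := hpb.lift_fst _ _ _
  have hetm : et ≫ m = f := hpb.lift_snd _ _ _
  obtain ⟨epic, cokerc⟩ := quot_cokernel hP E hQ0 hQ1 henv f hpo hgu hcu hucoker
  obtain ⟨monom, kerm⟩ := quot_kernel hP E hP₀ hP₁ hprec c hpb hκπ hκm hker
  refine ⟨Cc, I, c, m, et, cokerc, kerm, by rw [← qmap_comp, hetm], ?_⟩
  -- ============ Epi (qmap P et) ============
  -- push the preenvelope conflation out along et
  obtain ⟨E', eE, gE, uE, hpoE, hgEuE, heEuE, hcokerE, hconfeE⟩ := pc_exists E hconfa et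
  have hκm_coker : IsCokernelOf m κ := E.coker_of_conf hconfκ
  have epim : Epi m := hκm_coker.epi
  -- v' := κ ≫ eE is an inflation
  obtain ⟨Wv, dv, hconfv⟩ := E.infl_comp κ eE ⟨_, _, hconfκ⟩ ⟨_, _, hconfeE⟩
  -- j' and m₁'
  have hjcomm : a ≫ g = et ≫ (m ≫ c) := by
    rw [← Category.assoc, hetm, hpo.w]
  set j' := hpoE.desc g (m ≫ c) hjcomm with hj'def
  have hgEj' : gE ≫ j' = g := hpoE.inl_desc _ _ _
  have heEj' : eE ≫ j' = m ≫ c := hpoE.inr_desc _ _ _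
  set m₁' := hpoE.desc g₂ π hetπ.symm with hm₁'def
  have hgEm₁' : gE ≫ m₁' = g₂ := hpoE.inl_desc _ _ _
  have heEm₁' : eE ≫ m₁' = π := hpoE.inr_desc _ _ _
  have hm₁'p : m₁' ≫ p = j' := by
    apply hpoE.hom_ext
    · rw [← Category.assoc, hgEm₁', hg₂, hgEj']
    · rw [← Category.assoc, heEm₁', hpb.w, heEj']
  -- j' is a cokernel of v' := κ ≫ eE
  have hvm : (κ ≫ eE) ≫ m₁' = ι ≫ 𝟙 P₀ := by
    rw [Category.assoc, heEm₁', hκπ, Category.comp_id]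
  have hvj : (κ ≫ eE) ≫ j' = 0 := by
    rw [Category.assoc, heEj', ← Category.assoc, hκm, zero_comp]
  have hcokerj : IsCokernelOf j' (κ ≫ eE) := by
    refine ⟨hvj, ?_⟩
    intro T t ht
    have h1 : κ ≫ (eE ≫ t) = 0 := by rw [← Category.assoc, ht]
    obtain ⟨t₂, ht₂, -⟩ := hκm_coker.2 (eE ≫ t) h1
    have hτcomm : a ≫ (gE ≫ t) = f ≫ t₂ := by
      rw [← Category.assoc, hpoE.w, Category.assoc, ← ht₂, ← Category.assoc, hetm]
    set τ := hpo.desc (gE ≫ t) t₂ hτcomm with hτdef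
    have hgτ : g ≫ τ = gE ≫ t := hpo.inl_desc _ _ _
    have hcτ : c ≫ τ = t₂ := hpo.inr_desc _ _ _
    have hfac : j' ≫ τ = t := by
      apply hpoE.hom_ext
      · rw [← Category.assoc, hgEj', hgτ]
      · rw [← Category.assoc, heEj', Category.assoc, hcτ, ht₂]
    refine ⟨τ, hfac, ?_⟩
    intro y hy
    apply hpo.hom_ext
    · rw [hgτ, ← hy, ← Category.assoc, hgEj']
    · rw [hcτ]
      apply (cancel_epi m).mp
      rw [← Category.assoc, ← heEj', Category.assoc, hy, ht₂]
  have epij' : Epi j' := hcokerj.epi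
  -- the pushout B of v' along ι
  obtain ⟨B, v'', gB, ⟨WB, dB, hconfB⟩, hpoB⟩ := E.infl_pushout (κ ≫ eE) ⟨_, _, hconfv⟩ ι
  -- hpoB : IsPushout (κ ≫ eE) ι gB v''
  set σ' := hpoB.desc m₁' (𝟙 P₀) hvm with hσ'def
  have hgBσ' : gB ≫ σ' = m₁' := hpoB.inl_desc _ _ _
  have hv''σ' : v'' ≫ σ' = 𝟙 P₀ := hpoB.inr_desc _ _ _
  set κ' := hpoB.desc j' 0 (by rw [hvj, comp_zero]) with hκ'def
  have hgBκ' : gB ≫ κ' = j' := hpoB.inl_desc _ _ _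
  have hv''κ' : v'' ≫ κ' = 0 := hpoB.inr_desc _ _ _
  have epiκ' : Epi κ' := by
    have h1 : Epi (gB ≫ κ') := by rw [hgBκ']; exact epij'
    exact epi_of_epi gB κ'
  have hck : IsCokernelOf κ' v'' := by
    refine ⟨hv''κ', ?_⟩
    intro T t ht
    have h1 : (κ ≫ eE) ≫ (gB ≫ t) = 0 := by
      rw [← Category.assoc, hpoB.w, Category.assoc, ht, comp_zero]
    obtain ⟨τ, hτ, -⟩ := hcokerj.2 (gB ≫ t) h1
    have hfac : κ' ≫ τ = t := by
      apply hpoB.hom_ext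
      · rw [← Category.assoc, hgBκ', hτ]
      · rw [← Category.assoc, hv''κ', zero_comp, ht]
    refine ⟨τ, hfac, ?_⟩
    intro y hy
    apply (cancel_epi κ').mp
    rw [hy, hfac]
  -- splitting data
  set ε' := 𝟙 B - σ' ≫ v'' with hε'def
  have hv''ε' : v'' ≫ ε' = 0 := by
    rw [hε'def, Preadditive.comp_sub, Category.comp_id, ← Category.assoc, hv''σ',
      Category.id_comp, sub_self]
  obtain ⟨r', hr', -⟩ := hck.2 ε' hv''ε'
  have hε'κ' : ε' ≫ κ' = κ' := by
    rw [hε'def, Preadditive.sub_comp, Category.id_comp, Category.assoc, hv''κ', comp_zero,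
      sub_zero]
  have hr'κ' : r' ≫ κ' = 𝟙 Cc := by
    apply (cancel_epi κ').mp
    rw [← Category.assoc, hr', hε'κ', Category.comp_id]
  have hr'σ' : r' ≫ σ' = 0 := by
    apply (cancel_epi κ').mp
    rw [← Category.assoc, hr', comp_zero, hε'def, Preadditive.sub_comp, Category.id_comp,
      Category.assoc, hv''σ', Category.comp_id, sub_self]
  -- λ'
  have hιp : ι ≫ p = 0 := (E.ker_of_conf hconfp).1
  set lam' := hpoB.desc 0 p (by rw [hιp, comp_zero]) with hlam'def
  have hgBlam' : gB ≫ lam' = 0 := hpoB.inl_desc _ _ _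
  have hv''lam' : v'' ≫ lam' = p := hpoB.inr_desc _ _ _
  have hdecompB : 𝟙 B = κ' ≫ r' + σ' ≫ v'' := by rw [hr', hε'def]; abel
  have epip : Epi p := (E.coker_of_conf hconfp).epi
  have hr'lam' : r' ≫ lam' = -𝟙 Cc := by
    have hlam2 : lam' = κ' ≫ (r' ≫ lam') + σ' ≫ p := by
      conv_lhs => rw [← Category.id_comp lam', hdecompB]
      rw [Preadditive.add_comp, Category.assoc, Category.assoc, hv''lam']
    have h2 : j' ≫ (r' ≫ lam') + j' = 0 := by
      have h3 : j' ≫ (r' ≫ lam') + gB ≫ σ' ≫ p = gB ≫ lam' := by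
        conv_rhs => rw [hlam2]
        simp only [Preadditive.comp_add, Category.assoc]
        rw [← Category.assoc gB κ', hgBκ']
      rw [← Category.assoc gB σ' p, hgBσ', hm₁'p, hgBlam'] at h3
      exact h3
    have h2' : j' ≫ ((r' ≫ lam') + 𝟙 Cc) = 0 := by
      rw [Preadditive.comp_add, Category.comp_id]
      exact h2
    have h4 : ((r' ≫ lam') + 𝟙 Cc) = 0 := by
      apply (cancel_epi j').mp
      rw [h2', comp_zero]
    have := eq_neg_of_add_eq_zero_left h4
    rw [this]
  have hcokerlam' : IsCokernelOf lam' gB := by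
    refine ⟨hgBlam', ?_⟩
    intro T t ht
    have h1 : ι ≫ (v'' ≫ t) = 0 := by
      rw [← Category.assoc, ← hpoB.w, Category.assoc, ht, comp_zero]
    obtain ⟨t₁, ht₁, -⟩ := (E.coker_of_conf hconfp).2 (v'' ≫ t) h1
    have hδ : v'' ≫ (t - lam' ≫ t₁) = 0 := by
      rw [Preadditive.comp_sub, ← Category.assoc, hv''lam', ht₁, sub_self]
    obtain ⟨d, hd, -⟩ := hck.2 _ hδ
    have hdj : j' ≫ d = 0 := by
      have h3 : gB ≫ κ' ≫ d = gB ≫ (t - lam' ≫ t₁) := by rw [hd]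
      rw [← Category.assoc, hgBκ'] at h3
      rw [h3, Preadditive.comp_sub, ← Category.assoc, hgBlam', zero_comp, sub_zero, ht]
    have hd0 : d = 0 := by
      apply (cancel_epi j').mp
      rw [hdj, comp_zero]
    have ht2 : t = lam' ≫ t₁ := by
      have h5 := hd
      rw [hd0, comp_zero] at h5
      exact (sub_eq_zero.mp h5.symm)
    have epilam' : Epi lam' := by
      have h6 : Epi (v'' ≫ lam') := by rw [hv''lam']; exact epip
      exact epi_of_epi v'' lam'
    refine ⟨t₁, ht2.symm, ?_⟩
    intro y hy
    apply (cancel_epi lam').mp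
    rw [hy, ht2]
  -- the second pushout B₂ and the isomorphism θ
  obtain ⟨B₂, ι'', g₃, ⟨W₂, d₂, hconf₂⟩, hpoB₂⟩ := E.infl_pushout ι ⟨_, _, hconfp⟩ (κ ≫ eE)
  -- hpoB₂ : IsPushout ι (κ ≫ eE) g₃ ι''
  set θ := hpoB₂.desc v'' gB hpoB.w.symm with hθdef
  have hg₃θ : g₃ ≫ θ = v'' := hpoB₂.inl_desc _ _ _
  have hι''θ : ι'' ≫ θ = gB := hpoB₂.inr_desc _ _ _
  set θ' := hpoB.desc ι'' g₃ hpoB₂.w.symm with hθ'def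
  have hgBθ' : gB ≫ θ' = ι'' := hpoB.inl_desc _ _ _
  have hv''θ' : v'' ≫ θ' = g₃ := hpoB.inr_desc _ _ _
  have hθθ' : θ ≫ θ' = 𝟙 B₂ := by
    apply hpoB₂.hom_ext
    · rw [← Category.assoc, hg₃θ, hv''θ', Category.comp_id]
    · rw [← Category.assoc, hι''θ, hgBθ', Category.comp_id]
  have hθ'θ : θ' ≫ θ = 𝟙 B := by
    apply hpoB.hom_ext
    · rw [← Category.assoc, hgBθ', hι''θ, Category.comp_id]
    · rw [← Category.assoc, hv''θ', hg₃θ, Category.comp_id]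
  have monoι'' : Mono ι'' := (E.ker_of_conf hconf₂).mono
  have monogB : Mono gB := by
    have h1 : Mono (ι'' ≫ θ) := by
      have : IsIso θ := ⟨θ', hθθ', hθ'θ⟩
      exact mono_comp _ _
    rwa [hι''θ] at h1
  -- the "kernel" property of gB
  have hkergB : IsKernelOf gB lam' := by
    refine ⟨hgBlam', ?_⟩
    intro T t ht
    have h1 : gB ≫ (θ' ≫ d₂) = 0 := by
      rw [← Category.assoc, hgBθ', (E.ker_of_conf hconf₂).1]
    obtain ⟨φ, hφ, -⟩ := hcokerlam'.2 (θ' ≫ d₂) h1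
    have h2 : (t ≫ θ') ≫ d₂ = 0 := by
      rw [Category.assoc, ← hφ, ← Category.assoc, ht, zero_comp]
    obtain ⟨s, hs, -⟩ := (E.ker_of_conf hconf₂).2 (t ≫ θ') h2
    have hfac : s ≫ gB = t := by
      rw [← hι''θ, ← Category.assoc, hs, Category.assoc, hθ'θ, Category.comp_id]
    refine ⟨s, hfac, ?_⟩
    intro y hy
    apply (cancel_mono gB).mp
    rw [hy, hfac]
  -- the inverse n' of m₁'
  have ht'lam' : (v'' + p ≫ r') ≫ lam' = 0 := by
    rw [Preadditive.add_comp, hv''lam', Category.assoc, hr'lam', Preadditive.comp_neg,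
      Category.comp_id, add_neg_cancel]
  obtain ⟨n', hn', -⟩ := hkergB.2 (v'' + p ≫ r') ht'lam'
  have hn'm₁' : n' ≫ m₁' = 𝟙 P₀ := by
    rw [← hgBσ', ← Category.assoc, hn', Preadditive.add_comp, hv''σ', Category.assoc,
      hr'σ', comp_zero, add_zero]
  have hm₁'n' : m₁' ≫ n' = 𝟙 E' := by
    apply (cancel_mono gB).mp
    rw [Category.assoc, hn', Preadditive.comp_add, ← Category.assoc m₁' p, hm₁'p,
      ← hgBκ', Category.id_comp]
    have h7 : gB = gB ≫ (κ' ≫ r' + σ' ≫ v'') := by rw [← hdecompB, Category.comp_id]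
    conv_rhs => rw [h7]
    rw [Preadditive.comp_add, ← Category.assoc, ← Category.assoc, hgBσ', hgBκ']
    abel
  have heE_fact : eE = π ≫ n' := by
    have h5 : eE ≫ (m₁' ≫ n') = π ≫ n' := by rw [← Category.assoc, heEm₁']
    rw [hm₁'n', Category.comp_id] at h5
    exact h5
  -- conclude
  apply quot_epi_of hP
  intro T t ht
  obtain ⟨Q', hQ', b, a'', hab⟩ := ht
  obtain ⟨b₂, hb₂⟩ := henv.2 Q' hQ' b
  set w := hpoE.desc (b₂ ≫ a'') t (by rw [← Category.assoc, hb₂, hab]) with hwdef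
  have hew : eE ≫ w = t := hpoE.inr_desc _ _ _
  have : t = π ≫ (n' ≫ w) := by rw [← Category.assoc, ← heE_fact, hew]
  rw [this]
  exact ⟨P₀, hP₀, π, n' ≫ w, rfl⟩

end MainSides

/-- the quotient of an exact category by a pseudo-cluster tilting
subcategory is semi-abelian. -/
theorem quotient_semiAbelian {M : Type u} [Category.{v} M] [Preadditive M]
    [HasBinaryBiproducts M] (E : ExactStructure M) (P : Set M) (hP : IsAddSubcat P)
    (h : PseudoClusterTilting E.conf P) :
    IsSemiAbelianCat (QuotObj P) := by
  have hkf : ∀ {A B : QuotObj P} (φ : A ⟶ B), HasKernel φ := by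
    intro A B φ
    rcases A with ⟨A₀⟩
    rcases B with ⟨B₀⟩
    obtain ⟨f, rfl⟩ := qmap_surj P φ
    obtain ⟨K, D, k, c, hmor, kerk, -, -, -⟩ := monoSide E hP h f
    exact kerk.hasKernel
  have hcf : ∀ {A B : QuotObj P} (φ : A ⟶ B), HasCokernel φ := by
    intro A B φ
    rcases A with ⟨A₀⟩
    rcases B with ⟨B₀⟩
    obtain ⟨f, rfl⟩ := qmap_surj P φ
    obtain ⟨Cc, I, cY, m, et, cokerc, -, -, -⟩ := epiSide E hP h f
    exact cokerc.hasCokernel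
  have hk : HasKernels (QuotObj P) := ⟨hkf⟩
  have hc : HasCokernels (QuotObj P) := ⟨hcf⟩
  haveI := hk
  haveI := hc
  refine ⟨hk, hc, ?_⟩
  intro A B φ
  rcases A with ⟨A₀⟩
  rcases B with ⟨B₀⟩
  obtain ⟨f, rfl⟩ := qmap_surj P φ
  obtain ⟨K, D, k, c, hmor, kerk, cokerc, hfac, hmono⟩ := monoSide E hP h f
  obtain ⟨Cc, I, cY, m, et, cokerY, kerm, hfac2, hepi⟩ := epiSide E hP h f
  constructor
  · exact mono_comparison (qmap P f) (qmap P c) (qmap P hmor) (qmap P k) cokerc hmono hfac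
  · exact epi_comparison (qmap P f) (qmap P et) (qmap P m) (qmap P cY) kerm hepi hfac2

end PaperQEC
end

section
/- Let (M, E) be an exact category. Then the quotient category E(M)/S(M) of the category of conflations by the full subcategory of split conflations is an abelian category. -/
open CategoryTheory CategoryTheory.Limits

universe v u

namespace PaperQEC

section ExactHelpers

variable {M : Type u} [Category.{v} M] [Preadditive M]

lemma IsKernelOf.hom_ext {K X Y T : M} {k : K ⟶ X} {f : X ⟶ Y} (h : IsKernelOf k f)
    {a b : T ⟶ K} (hab : a ≫ k = b ≫ k) : a = b := by
  obtain ⟨t, ht, huniq⟩ := h.2 (b ≫ k) (by rw [Category.assoc, h.1, comp_zero])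
  rw [huniq a hab, huniq b rfl]

variable (E : ExactStructure M)

lemma defl_precomp_iso {Y' Y Z : M} (e : Y' ≅ Y) {d : Y ⟶ Z}
    (h : IsDeflation E.conf d) : IsDeflation E.conf (e.hom ≫ d) := by
  obtain ⟨W, i, hi⟩ := h
  exact ⟨W, i ≫ e.inv, E.isoClosed (Iso.refl W) e.symm (Iso.refl Z) (by simp) (by simp) hi⟩

lemma exists_zeroish (X : M) : ∃ (Z₀ : M) (d : X ⟶ Z₀), E.conf (𝟙 X) d ∧
    (∀ (T : M) (a b : Z₀ ⟶ T), a = b) ∧ (∀ (T : M) (a b : T ⟶ Z₀), a = b) := by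
  obtain ⟨Z₀, d, hconf⟩ := E.id_isInflation X
  obtain ⟨hd0, huniv⟩ := E.coker_of_conf hconf
  have hd : d = 0 := by simpa using hd0
  have hout : ∀ (T : M) (a b : Z₀ ⟶ T), a = b := by
    intro T a b
    obtain ⟨t, ht, huniq⟩ := huniv (0 : X ⟶ T) (by simp)
    rw [huniq a (show d ≫ a = 0 by rw [hd, zero_comp]),
      huniq b (show d ≫ b = 0 by rw [hd, zero_comp])]
  have hid : (𝟙 Z₀ : Z₀ ⟶ Z₀) = 0 := hout _ _ _
  refine ⟨Z₀, d, hconf, hout, fun T a b => ?_⟩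
  calc a = a ≫ 𝟙 Z₀ := (Category.comp_id a).symm
    _ = b ≫ 𝟙 Z₀ := by rw [hid, comp_zero, comp_zero]
    _ = b := Category.comp_id b

variable [HasBinaryBiproducts M]

lemma defl_snd (X Z : M) : IsDeflation E.conf (biprod.snd : X ⊞ Z ⟶ Z) := by
  obtain ⟨Z₀, d, hconf, hout, hin⟩ := exists_zeroish E X
  obtain ⟨A, p', g, hp', hpb⟩ := E.defl_pullback d ⟨X, 𝟙 X, hconf⟩ (0 : Z ⟶ Z₀)
  have myLim : IsLimit (PullbackCone.mk (biprod.fst : X ⊞ Z ⟶ X) biprod.snd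
      (hin _ _ _ : (biprod.fst : X ⊞ Z ⟶ X) ≫ d = biprod.snd ≫ (0 : Z ⟶ Z₀))) :=
    PullbackCone.IsLimit.mk _ (fun s => biprod.lift s.fst s.snd)
      (fun s => biprod.lift_fst _ _) (fun s => biprod.lift_snd _ _)
      (fun s m h1 h2 => by apply biprod.hom_ext <;> simpa)
  have myPB : IsPullback (biprod.fst : X ⊞ Z ⟶ X) biprod.snd d (0 : Z ⟶ Z₀) :=
    IsPullback.of_isLimit myLim
  have h2 : (biprod.snd : X ⊞ Z ⟶ Z) = (hpb.isoIsPullback _ _ myPB).symm.hom ≫ p' :=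
    (Iso.eq_inv_comp (hpb.isoIsPullback _ _ myPB)).mpr
      (hpb.isoIsPullback_hom_snd _ _ myPB)
  rw [h2]
  exact defl_precomp_iso E _ hp'

lemma defl_map_id {Y Z : M} (X : M) {p : Y ⟶ Z} (hp : IsDeflation E.conf p) :
    IsDeflation E.conf (biprod.map (𝟙 X) p : X ⊞ Y ⟶ X ⊞ Z) := by
  obtain ⟨A, p', g, hp', hpb⟩ := E.defl_pullback p hp (biprod.snd : X ⊞ Z ⟶ Z)
  have myLim : IsLimit (PullbackCone.mk (biprod.snd : X ⊞ Y ⟶ Y) (biprod.map (𝟙 X) p)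
      (by simp : (biprod.snd : X ⊞ Y ⟶ Y) ≫ p = biprod.map (𝟙 X) p ≫ biprod.snd)) :=
    PullbackCone.IsLimit.mk _ (fun s => biprod.lift (s.snd ≫ biprod.fst) s.fst)
      (fun s => by simp)
      (fun s => by
        apply biprod.hom_ext
        · simp
        · simp [s.condition])
      (fun s m h1 h2 => by
        apply biprod.hom_ext
        · have h3 := congrArg (fun t => t ≫ (biprod.fst : X ⊞ Z ⟶ X)) h2
          simpa using h3
        · simpa using h1)
  have myPB : IsPullback (biprod.snd : X ⊞ Y ⟶ Y) (biprod.map (𝟙 X) p) p biprod.snd :=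
    IsPullback.of_isLimit myLim
  have h2 : (biprod.map (𝟙 X) p : X ⊞ Y ⟶ X ⊞ Z) =
      (hpb.isoIsPullback _ _ myPB).symm.hom ≫ p' :=
    (Iso.eq_inv_comp (hpb.isoIsPullback _ _ myPB)).mpr
      (hpb.isoIsPullback_hom_snd _ _ myPB)
  rw [h2]
  exact defl_precomp_iso E _ hp'

lemma defl_desc {Y Z : M} (X : M) (g : X ⟶ Z) {p : Y ⟶ Z} (hp : IsDeflation E.conf p) :
    IsDeflation E.conf (biprod.desc g p : X ⊞ Y ⟶ Z) := by
  let φ : X ⊞ Z ≅ X ⊞ Z :=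
    { hom := biprod.lift biprod.fst (biprod.desc g (𝟙 Z))
      inv := biprod.lift biprod.fst (biprod.desc (-g) (𝟙 Z))
      hom_inv_id := by apply biprod.hom_ext' <;> apply biprod.hom_ext <;> simp
      inv_hom_id := by apply biprod.hom_ext' <;> apply biprod.hom_ext <;> simp }
  have h1 : (biprod.desc g (𝟙 Z) : X ⊞ Z ⟶ Z) = φ.hom ≫ biprod.snd := by
    apply biprod.hom_ext' <;> simp [φ]
  have h2 : IsDeflation E.conf (biprod.desc g (𝟙 Z) : X ⊞ Z ⟶ Z) := by
    rw [h1]; exact defl_precomp_iso E φ (defl_snd E X Z)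
  have h3 : (biprod.desc g p : X ⊞ Y ⟶ Z) = biprod.map (𝟙 X) p ≫ biprod.desc g (𝟙 Z) := by
    apply biprod.hom_ext' <;> simp
  have h4 := E.defl_comp (biprod.map (𝟙 X) p) (biprod.desc g (𝟙 Z)) (defl_map_id E X hp) h2
  rw [h3]
  exact h4

lemma conf_inl_snd (X Z : M) :
    E.conf (biprod.inl : X ⟶ X ⊞ Z) (biprod.snd : X ⊞ Z ⟶ Z) := by
  obtain ⟨W, ι, hι⟩ := defl_snd E X Z
  have hker := E.ker_of_conf hι
  have hι0 : ι ≫ (biprod.snd : X ⊞ Z ⟶ Z) = 0 := hker.1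
  obtain ⟨t, ht, huniq⟩ := hker.2 (biprod.inl : X ⟶ X ⊞ Z) (by simp)
  have ht' : (ι ≫ biprod.fst) ≫ biprod.inl = ι := by
    have hz : (ι ≫ biprod.snd) ≫ (biprod.inr : Z ⟶ X ⊞ Z) = 0 := by rw [hι0, zero_comp]
    calc (ι ≫ biprod.fst) ≫ biprod.inl
        = (ι ≫ biprod.fst) ≫ biprod.inl + (ι ≫ biprod.snd) ≫ biprod.inr := by
          rw [hz, add_zero]
      _ = ι ≫ (biprod.fst ≫ biprod.inl + biprod.snd ≫ biprod.inr) := by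
          rw [Preadditive.comp_add, Category.assoc, Category.assoc]
      _ = ι := by rw [biprod.total, Category.comp_id]
  have hmono : ∀ {T : M} (a b : T ⟶ X),
      a ≫ (biprod.inl : X ⟶ X ⊞ Z) = b ≫ biprod.inl → a = b := by
    intro T a b hab
    have h3 := congrArg (fun u => u ≫ (biprod.fst : X ⊞ Z ⟶ X)) hab
    simpa using h3
  have h1 : t ≫ (ι ≫ biprod.fst) = 𝟙 X := by
    apply hmono
    rw [Category.assoc, ht', ht, Category.id_comp]
  have h2 : (ι ≫ biprod.fst) ≫ t = 𝟙 W := by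
    apply hker.hom_ext
    rw [Category.assoc, ht, ht', Category.id_comp]
  exact E.isoClosed (⟨ι ≫ biprod.fst, t, h2, h1⟩ : W ≅ X) (Iso.refl _) (Iso.refl _)
    (by rw [Iso.refl_hom, Category.comp_id]; exact ht'.symm)
    (by simp) hι

end ExactHelpers
section ConfHelpers

variable {M : Type u} [Category.{v} M] [Preadditive M] {E : ExactStructure M}

@[simp] lemma homC₁_zero {A B : ConfObj E} : homC₁ (0 : A ⟶ B) = 0 := rfl
@[simp] lemma homC₂_zero {A B : ConfObj E} : homC₂ (0 : A ⟶ B) = 0 := rfl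
@[simp] lemma homC₃_zero {A B : ConfObj E} : homC₃ (0 : A ⟶ B) = 0 := rfl
@[simp] lemma homC₁_neg {A B : ConfObj E} (f : A ⟶ B) : homC₁ (-f) = -homC₁ f := rfl
@[simp] lemma homC₂_neg {A B : ConfObj E} (f : A ⟶ B) : homC₂ (-f) = -homC₂ f := rfl
@[simp] lemma homC₃_neg {A B : ConfObj E} (f : A ⟶ B) : homC₃ (-f) = -homC₃ f := rfl
@[simp] lemma homC₁_sub {A B : ConfObj E} (f g : A ⟶ B) :
    homC₁ (f - g) = homC₁ f - homC₁ g := by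
  rw [sub_eq_add_neg, homC₁_add, homC₁_neg, ← sub_eq_add_neg]
@[simp] lemma homC₂_sub {A B : ConfObj E} (f g : A ⟶ B) :
    homC₂ (f - g) = homC₂ f - homC₂ g := by
  rw [sub_eq_add_neg, homC₂_add, homC₂_neg, ← sub_eq_add_neg]
@[simp] lemma homC₃_sub {A B : ConfObj E} (f g : A ⟶ B) :
    homC₃ (f - g) = homC₃ f - homC₃ g := by
  rw [sub_eq_add_neg, homC₃_add, homC₃_neg, ← sub_eq_add_neg]

/-- square (degree (-1,0)) of a conflation morphism -/
lemma conf_sq₁ {A B : ConfObj E} (f : A ⟶ B) : A.i ≫ homC₂ f = homC₁ f ≫ B.i := f.2.1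

/-- square (degree (0,1)) of a conflation morphism -/
lemma conf_sq₂ {A B : ConfObj E} (f : A ⟶ B) : A.d ≫ homC₃ f = homC₂ f ≫ B.d := f.2.2

lemma conf_i_d (A : ConfObj E) : A.i ≫ A.d = 0 := (E.ker_of_conf A.conf).1

/-- Key lifting lemma: a morphism of conflations can be built from its degree `1`
component together with a lift of it through the deflations in degree `0`. -/
lemma exists_conf_hom {A B : ConfObj E} (h₃ : A.X₃ ⟶ B.X₃) (u : A.X₂ ⟶ B.X₂)
    (hu : u ≫ B.d = A.d ≫ h₃) : ∃ f : A ⟶ B, homC₂ f = u ∧ homC₃ f = h₃ := by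
  have hkerB := E.ker_of_conf B.conf
  obtain ⟨f₁, hf₁, -⟩ := hkerB.2 (A.i ≫ u) (by
    rw [Category.assoc, hu, ← Category.assoc, conf_i_d, zero_comp])
  exact ⟨⟨(f₁, u, h₃), hf₁.symm, hu.symm⟩, rfl, rfl⟩

/-- Key membership lemma: a morphism of conflations lies in the ideal of morphisms
factoring through split conflations iff its degree `1` component lifts through
the deflation of the target. -/
lemma mem_factorIdeal_iff_s17 [HasBinaryBiproducts M] {A B : ConfObj E} (f : A ⟶ B) :
    f ∈ factorIdeal (splitObjs E) A B ↔ ∃ v : A.X₃ ⟶ B.X₂, v ≫ B.d = homC₃ f := by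
  constructor
  · intro hf
    let R : AddSubgroup (A ⟶ B) :=
      { carrier := {g | ∃ v : A.X₃ ⟶ B.X₂, v ≫ B.d = homC₃ g}
        zero_mem' := ⟨0, by simp⟩
        add_mem' := by
          rintro a b ⟨v, hv⟩ ⟨w, hw⟩
          exact ⟨v + w, by rw [Preadditive.add_comp, hv, hw, homC₃_add]⟩
        neg_mem' := by
          rintro a ⟨v, hv⟩
          exact ⟨-v, by rw [Preadditive.neg_comp, hv, homC₃_neg]⟩ }
    have hle : factorIdeal (splitObjs E) A B ≤ R := by
      refine (AddSubgroup.closure_le _).mpr ?_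
      rintro g ⟨S, hS, a, b, rfl⟩
      obtain ⟨⟨r, hr⟩, ⟨s, hs⟩⟩ := hS
      refine ⟨homC₃ a ≫ s ≫ homC₂ b, ?_⟩
      calc (homC₃ a ≫ s ≫ homC₂ b) ≫ B.d
          = homC₃ a ≫ s ≫ (homC₂ b ≫ B.d) := by rw [Category.assoc, Category.assoc]
        _ = homC₃ a ≫ s ≫ S.d ≫ homC₃ b := by rw [← conf_sq₂ b]
        _ = homC₃ a ≫ (s ≫ S.d) ≫ homC₃ b := by rw [Category.assoc]
        _ = homC₃ a ≫ homC₃ b := by rw [hs, Category.id_comp]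
        _ = homC₃ (a ≫ b) := (homC₃_comp a b).symm
    exact hle hf
  · rintro ⟨v, hv⟩
    have hkerB := E.ker_of_conf B.conf
    obtain ⟨w₁, hw₁, -⟩ := hkerB.2 (homC₂ f - A.d ≫ v) (by
      rw [Preadditive.sub_comp, Category.assoc, hv, ← conf_sq₂ f, sub_self])
    have hmono : ∀ {T : M} (a b : T ⟶ B.X₁), a ≫ B.i = b ≫ B.i → a = b :=
      fun a b hab => hkerB.hom_ext hab
    refine AddSubgroup.subset_closure
      ⟨⟨B.X₁, B.X₁ ⊞ A.X₃, A.X₃, biprod.inl, biprod.snd, conf_inl_snd E _ _⟩,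
        ⟨⟨biprod.fst, by simp⟩, ⟨biprod.inr, by simp⟩⟩,
        ⟨((homC₁ f : A.X₁ ⟶ B.X₁), biprod.lift w₁ A.d, 𝟙 A.X₃), ?_, ?_⟩,
        ⟨(𝟙 B.X₁, biprod.desc B.i v, (homC₃ f : A.X₃ ⟶ B.X₃)), ?_, ?_⟩, ?_⟩
    · -- A.i ≫ lift w₁ A.d = homC₁ f ≫ inl
      apply biprod.hom_ext
      · simp only [Category.assoc, biprod.lift_fst, biprod.inl_fst, Category.comp_id]
        apply hmono
        rw [Category.assoc, hw₁, Preadditive.comp_sub, conf_sq₁ f, ← Category.assoc,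
          conf_i_d, zero_comp, sub_zero]
      · simp [conf_i_d]
    · -- A.d ≫ 𝟙 = lift w₁ A.d ≫ snd
      simp
    · -- inl ≫ desc B.i v = 𝟙 ≫ B.i
      simp
    · -- snd ≫ homC₃ f = desc B.i v ≫ B.d
      apply biprod.hom_ext' <;> simp [conf_i_d, hv]
    · -- composite equals f
      apply confHom_ext
      · show homC₁ f ≫ 𝟙 B.X₁ = homC₁ f
        simp
      · show biprod.lift w₁ A.d ≫ biprod.desc B.i v = homC₂ f
        rw [biprod.lift_desc, hw₁]
        abel
      · show 𝟙 A.X₃ ≫ homC₃ f = homC₃ f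
        simp

end ConfHelpers
section MasterLemma

variable {M : Type u} [Category.{v} M] [Preadditive M] [HasBinaryBiproducts M]
  {E : ExactStructure M}

lemma comp_biprod_desc {W X Y Z : M} (x : W ⟶ X ⊞ Y) (a : X ⟶ Z) (b : Y ⟶ Z) :
    x ≫ biprod.desc a b = x ≫ biprod.fst ≫ a + x ≫ biprod.snd ≫ b := by
  have h : biprod.desc a b = biprod.fst ≫ a + biprod.snd ≫ b := by
    apply biprod.hom_ext' <;> simp
  rw [h, Preadditive.comp_add]

lemma exists_abelian_data {A B : ConfObj E} (f : A ⟶ B) :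
    ∃ (Kr : ConfObj E) (k : Kr ⟶ A) (C₀ : ConfObj E) (p : A ⟶ C₀) (m : C₀ ⟶ B)
      (C : ConfObj E) (c : B ⟶ C),
      k ≫ f ∈ factorIdeal (splitObjs E) Kr B ∧
      (∀ (D : ConfObj E) (g : D ⟶ A), g ≫ f ∈ factorIdeal (splitObjs E) D B →
        ∃ h : D ⟶ Kr, h ≫ k - g ∈ factorIdeal (splitObjs E) D A) ∧
      (∀ (D : ConfObj E) (h h' : D ⟶ Kr), h ≫ k - h' ≫ k ∈ factorIdeal (splitObjs E) D A →
        h - h' ∈ factorIdeal (splitObjs E) D Kr) ∧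
      k ≫ p ∈ factorIdeal (splitObjs E) Kr C₀ ∧
      (∀ (D : ConfObj E) (g : A ⟶ D), k ≫ g ∈ factorIdeal (splitObjs E) Kr D →
        ∃ h : C₀ ⟶ D, p ≫ h - g ∈ factorIdeal (splitObjs E) A D) ∧
      (∀ (D : ConfObj E) (h h' : C₀ ⟶ D), p ≫ h - p ≫ h' ∈ factorIdeal (splitObjs E) A D →
        h - h' ∈ factorIdeal (splitObjs E) C₀ D) ∧
      p ≫ m - f ∈ factorIdeal (splitObjs E) A B ∧
      f ≫ c ∈ factorIdeal (splitObjs E) A C ∧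
      (∀ (D : ConfObj E) (g : B ⟶ D), f ≫ g ∈ factorIdeal (splitObjs E) A D →
        ∃ h : C ⟶ D, c ≫ h - g ∈ factorIdeal (splitObjs E) B D) ∧
      (∀ (D : ConfObj E) (h h' : C ⟶ D), c ≫ h - c ≫ h' ∈ factorIdeal (splitObjs E) B D →
        h - h' ∈ factorIdeal (splitObjs E) C D) ∧
      m ≫ c ∈ factorIdeal (splitObjs E) C₀ C ∧
      (∀ (D : ConfObj E) (g : D ⟶ B), g ≫ c ∈ factorIdeal (splitObjs E) D C →
        ∃ h : D ⟶ C₀, h ≫ m - g ∈ factorIdeal (splitObjs E) D B) ∧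
      (∀ (D : ConfObj E) (h h' : D ⟶ C₀), h ≫ m - h' ≫ m ∈ factorIdeal (splitObjs E) D B →
        h - h' ∈ factorIdeal (splitObjs E) D C₀) := by
  obtain ⟨P, q, e, hq, hPB⟩ := E.defl_pullback B.d ⟨B.X₁, B.i, B.conf⟩ (homC₃ f)
  obtain ⟨Q, π, mQ, hπ, hQA⟩ := E.defl_pullback A.d ⟨A.X₁, A.i, A.conf⟩ q
  obtain ⟨L, lam, hlam⟩ := hπ
  set Kr : ConfObj E := ⟨L, Q, P, lam, π, hlam⟩ with hKrdef
  obtain ⟨k, hk₂, hk₃⟩ := exists_conf_hom (E := E) (A := Kr) (B := A) q mQ hQA.w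
  obtain ⟨K, κ, hκ⟩ := defl_desc E A.X₃ (homC₃ f) ⟨B.X₁, B.i, B.conf⟩
  set C : ConfObj E := ⟨K, A.X₃ ⊞ B.X₂, B.X₃, κ, biprod.desc (homC₃ f) B.d, hκ⟩ with hCdef
  obtain ⟨c, hc₂, hc₃⟩ :=
    exists_conf_hom (E := E) (A := B) (B := C) (𝟙 B.X₃) biprod.inr (by simp; exact biprod.inr_desc _ _)
  obtain ⟨K₀, κ₀, hκ₀⟩ := defl_desc E P q ⟨A.X₁, A.i, A.conf⟩
  set C₀ : ConfObj E := ⟨K₀, P ⊞ A.X₂, A.X₃, κ₀, biprod.desc q A.d, hκ₀⟩ with hC₀def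
  obtain ⟨p, hp₂, hp₃⟩ :=
    exists_conf_hom (E := E) (A := A) (B := C₀) (𝟙 A.X₃) biprod.inr (by simp; exact biprod.inr_desc _ _)
  obtain ⟨m, hm₂, hm₃⟩ := exists_conf_hom (E := E) (A := C₀) (B := B)
    (homC₃ f : A.X₃ ⟶ B.X₃)
    (biprod.desc e (homC₂ f)) (by
      apply biprod.hom_ext'
      · simpa [C₀] using hPB.w
      · simpa [C₀] using (conf_sq₂ f).symm)
  refine ⟨Kr, k, C₀, p, m, C, c, ?_, ?_, ?_, ?_, ?_, ?_, ?_, ?_, ?_, ?_, ?_, ?_, ?_⟩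
  · -- (1) k ≫ f ∈ I
    exact (mem_factorIdeal_iff_s17 _).mpr ⟨e, by rw [homC₃_comp, hk₃]; exact hPB.w⟩
  · -- (2) kernel existence
    intro D g hg
    obtain ⟨v, hv⟩ := (mem_factorIdeal_iff_s17 _).mp hg
    rw [homC₃_comp] at hv
    have hwq : hPB.lift v (homC₃ g) hv ≫ q = homC₃ g := hPB.lift_snd v (homC₃ g) hv
    have hu1 : homC₂ g ≫ A.d = (D.d ≫ hPB.lift v (homC₃ g) hv) ≫ q := by
      rw [Category.assoc, hwq, ← conf_sq₂ g]
    obtain ⟨h, hh₂, hh₃⟩ := exists_conf_hom (E := E) (A := D) (B := Kr)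
      (hPB.lift v (homC₃ g) hv) (hQA.lift (homC₂ g) (D.d ≫ hPB.lift v (homC₃ g) hv) hu1)
      (hQA.lift_snd _ _ _)
    refine ⟨h, (mem_factorIdeal_iff_s17 _).mpr ⟨0, ?_⟩⟩
    rw [zero_comp, homC₃_sub, homC₃_comp, hh₃, hk₃, hwq, sub_self]
  · -- (3) kernel uniqueness
    intro D h h' hhh
    obtain ⟨v, hv⟩ := (mem_factorIdeal_iff_s17 _).mp hhh
    rw [homC₃_sub, homC₃_comp, homC₃_comp, hk₃, ← Preadditive.sub_comp, ← homC₃_sub] at hv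
    exact (mem_factorIdeal_iff_s17 _).mpr ⟨hQA.lift v (homC₃ (h - h')) hv, hQA.lift_snd _ _ _⟩
  · -- (4) k ≫ p ∈ I
    refine (mem_factorIdeal_iff_s17 _).mpr ⟨biprod.inl, ?_⟩
    rw [homC₃_comp, hk₃, hp₃, Category.comp_id]
    exact biprod.inl_desc _ _
  · -- (5) cokernel-of-k existence
    intro D g hg
    obtain ⟨v, hv⟩ := (mem_factorIdeal_iff_s17 _).mp hg
    rw [homC₃_comp, hk₃] at hv
    obtain ⟨h, hh₂, hh₃⟩ := exists_conf_hom (E := E) (A := C₀) (B := D)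
      (homC₃ g : A.X₃ ⟶ D.X₃)
      (biprod.desc v (homC₂ g)) (by
        apply biprod.hom_ext'
        · simpa [C₀] using hv
        · simpa [C₀] using (conf_sq₂ g).symm)
    refine ⟨h, (mem_factorIdeal_iff_s17 _).mpr ⟨0, ?_⟩⟩
    rw [zero_comp, homC₃_sub, homC₃_comp, hp₃, hh₃, Category.id_comp, sub_self]
  · -- (6) cokernel-of-k uniqueness
    intro D h h' hhh
    obtain ⟨v, hv⟩ := (mem_factorIdeal_iff_s17 _).mp hhh
    rw [homC₃_sub, homC₃_comp, homC₃_comp, hp₃, Category.id_comp, Category.id_comp,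
      ← homC₃_sub] at hv
    exact (mem_factorIdeal_iff_s17 _).mpr ⟨v, hv⟩
  · -- (7) p ≫ m = f mod I
    refine (mem_factorIdeal_iff_s17 _).mpr ⟨0, ?_⟩
    rw [zero_comp, homC₃_sub, homC₃_comp, hp₃, hm₃, Category.id_comp, sub_self]
  · -- (8) f ≫ c ∈ I
    refine (mem_factorIdeal_iff_s17 _).mpr ⟨biprod.inl, ?_⟩
    rw [homC₃_comp, hc₃, Category.comp_id]
    exact biprod.inl_desc _ _
  · -- (9) cokernel existence
    intro D g hg
    obtain ⟨v, hv⟩ := (mem_factorIdeal_iff_s17 _).mp hg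
    rw [homC₃_comp] at hv
    obtain ⟨h, hh₂, hh₃⟩ := exists_conf_hom (E := E) (A := C) (B := D)
      (homC₃ g : B.X₃ ⟶ D.X₃)
      (biprod.desc v (homC₂ g)) (by
        apply biprod.hom_ext'
        · simpa [C] using hv
        · simpa [C] using (conf_sq₂ g).symm)
    refine ⟨h, (mem_factorIdeal_iff_s17 _).mpr ⟨0, ?_⟩⟩
    rw [zero_comp, homC₃_sub, homC₃_comp, hc₃, hh₃, Category.id_comp, sub_self]
  · -- (10) cokernel uniqueness
    intro D h h' hhh
    obtain ⟨v, hv⟩ := (mem_factorIdeal_iff_s17 _).mp hhh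
    rw [homC₃_sub, homC₃_comp, homC₃_comp, hc₃, Category.id_comp, Category.id_comp,
      ← homC₃_sub] at hv
    exact (mem_factorIdeal_iff_s17 _).mpr ⟨v, hv⟩
  · -- (11) m ≫ c ∈ I
    refine (mem_factorIdeal_iff_s17 _).mpr ⟨biprod.inl, ?_⟩
    rw [homC₃_comp, hm₃, hc₃, Category.comp_id]
    exact biprod.inl_desc _ _
  · -- (12) kernel-of-c existence for m
    intro D t ht
    obtain ⟨v, hv⟩ := (mem_factorIdeal_iff_s17 _).mp ht
    rw [homC₃_comp, hc₃, Category.comp_id] at hv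
    have key : v ≫ biprod.fst ≫ homC₃ f + v ≫ biprod.snd ≫ B.d = homC₃ t := by
      rw [← comp_biprod_desc]; exact hv
    have hlift : (homC₂ t - D.d ≫ v ≫ biprod.snd) ≫ B.d
        = (D.d ≫ v ≫ biprod.fst) ≫ homC₃ f := by
      rw [Preadditive.sub_comp, ← conf_sq₂ t, ← key, Preadditive.comp_add]
      simp only [Category.assoc]
      abel
    have hwq : hPB.lift _ _ hlift ≫ q = D.d ≫ v ≫ biprod.fst := hPB.lift_snd _ _ _
    obtain ⟨h, hh₂, hh₃⟩ := exists_conf_hom (E := E) (A := D) (B := C₀) (v ≫ biprod.fst)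
      (hPB.lift _ _ hlift ≫ biprod.inl) (by
        rw [Category.assoc,
          show (biprod.inl ≫ C₀.d : P ⟶ A.X₃) = q from biprod.inl_desc _ _]
        exact hwq)
    refine ⟨h, (mem_factorIdeal_iff_s17 _).mpr ⟨-(v ≫ biprod.snd), ?_⟩⟩
    rw [Preadditive.neg_comp, homC₃_sub, homC₃_comp, hh₃, hm₃, ← key]
    simp only [Category.assoc]
    abel
  · -- (13) kernel-of-c uniqueness for m
    intro D h h' hhh
    obtain ⟨v, hv⟩ := (mem_factorIdeal_iff_s17 _).mp hhh
    rw [homC₃_sub, homC₃_comp, homC₃_comp, hm₃, ← Preadditive.sub_comp, ← homC₃_sub] at hv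
    refine (mem_factorIdeal_iff_s17 _).mpr
      ⟨hPB.lift v (homC₃ (h - h') : D.X₃ ⟶ C₀.X₃) hv ≫ biprod.inl, ?_⟩
    rw [Category.assoc, show (biprod.inl ≫ C₀.d : P ⟶ A.X₃) = q from biprod.inl_desc _ _]
    exact hPB.lift_snd _ _ _

end MasterLemma
section Gen

variable {D : Type u} [Category.{v} D] [Preadditive D] [HasKernels D] [HasCokernels D]

lemma isIso_coimageImageComparison_of_data {X Y : D} (f : X ⟶ Y)
    {K C₀ C : D} (k : K ⟶ X) (p : X ⟶ C₀) (m : C₀ ⟶ Y) (cc : Y ⟶ C)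
    (wk : k ≫ f = 0) (hk : IsLimit (KernelFork.ofι k wk))
    (wp : k ≫ p = 0) (hp : IsColimit (CokernelCofork.ofπ p wp))
    (hpm : p ≫ m = f)
    (wc : f ≫ cc = 0) (hc : IsColimit (CokernelCofork.ofπ cc wc))
    (wm : m ≫ cc = 0) (hm : IsLimit (KernelFork.ofι m wm)) :
    IsIso (Abelian.coimageImageComparison f) := by
  let iso1 := hk.conePointUniqueUpToIso (kernelIsKernel f)
  have fact1 : iso1.hom ≫ kernel.ι f = k := by
    simpa using hk.conePointUniqueUpToIso_hom_comp (kernelIsKernel f) WalkingParallelPair.zero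
  have hιf : kernel.ι f = iso1.inv ≫ k := (Iso.eq_inv_comp iso1).mpr fact1
  have hp2 : IsColimit (CokernelCofork.ofπ p
      (show kernel.ι f ≫ p = 0 by rw [hιf, Category.assoc, wp, comp_zero])) :=
    isCokernelEpiComp hp iso1.inv hιf
  let iso2 := (cokernelIsCokernel (kernel.ι f)).coconePointUniqueUpToIso hp2
  have fact2 : cokernel.π (kernel.ι f) ≫ iso2.hom = p := by
    simpa using (cokernelIsCokernel (kernel.ι f)).comp_coconePointUniqueUpToIso_hom hp2
      WalkingParallelPair.one
  let iso3 := hc.coconePointUniqueUpToIso (cokernelIsCokernel f)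
  have fact3 : cc ≫ iso3.hom = cokernel.π f := by
    simpa using hc.comp_coconePointUniqueUpToIso_hom (cokernelIsCokernel f) WalkingParallelPair.one
  have hm2 : IsLimit (KernelFork.ofι m
      (show m ≫ cokernel.π f = 0 by rw [← fact3, ← Category.assoc, wm, zero_comp])) :=
    isKernelCompMono hm iso3.hom fact3.symm
  let iso4 := hm2.conePointUniqueUpToIso (kernelIsKernel (cokernel.π f))
  have fact4 : iso4.hom ≫ kernel.ι (cokernel.π f) = m := by
    simpa using hm2.conePointUniqueUpToIso_hom_comp (kernelIsKernel (cokernel.π f))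
      WalkingParallelPair.zero
  have key : Abelian.coimageImageComparison f = iso2.hom ≫ iso4.hom := by
    rw [← cancel_epi (cokernel.π (kernel.ι f)), ← cancel_mono (kernel.ι (cokernel.π f))]
    have := Abelian.coimage_image_factorisation f
    simp only [Category.assoc]
    calc cokernel.π (kernel.ι f) ≫ Abelian.coimageImageComparison f ≫ kernel.ι (cokernel.π f)
        = f := Abelian.coimage_image_factorisation f
      _ = p ≫ m := hpm.symm
      _ = cokernel.π (kernel.ι f) ≫ iso2.hom ≫ iso4.hom ≫ kernel.ι (cokernel.π f) := by
          rw [fact4, ← Category.assoc, fact2]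
  rw [key]
  infer_instance

end Gen
section QuotAssembly

set_option linter.unusedSectionVars false

variable {M : Type u} [Category.{v} M] [Preadditive M] [HasBinaryBiproducts M]
  {E : ExactStructure M}

/-- The image in the quotient category of a morphism of conflations. -/
def qh {A B : ConfObj E} (a : A ⟶ B) :
    (QuotObj.mk A : QuotObj (splitObjs E)) ⟶ QuotObj.mk B :=
  QuotientAddGroup.mk a

private lemma q_out_eq {A B : ConfObj E}
    (G : (QuotObj.mk A : QuotObj (splitObjs E)) ⟶ QuotObj.mk B) :
    qh (Quotient.out G) = G := Quotient.out_eq G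

private lemma q_comp {A B D : ConfObj E} (a : A ⟶ B) (b : B ⟶ D) :
    qh a ≫ qh b = qh (a ≫ b) := rfl

private lemma q_eq_of_sub_mem {A B : ConfObj E} {a b : A ⟶ B}
    (h : a - b ∈ factorIdeal (splitObjs E) A B) : qh a = qh b :=
  (QuotientAddGroup.eq_iff_sub_mem).mpr h

private lemma q_sub_mem_of_eq {A B : ConfObj E} {a b : A ⟶ B}
    (h : qh a = qh b) : a - b ∈ factorIdeal (splitObjs E) A B :=
  (QuotientAddGroup.eq_iff_sub_mem).mp h

private lemma q_eq_zero {A B : ConfObj E} {a : A ⟶ B}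
    (h : a ∈ factorIdeal (splitObjs E) A B) : qh a = 0 :=
  (QuotientAddGroup.eq_zero_iff _).mpr h

private lemma q_mem_of_eq_zero {A B : ConfObj E} {a : A ⟶ B}
    (h : qh a = 0) : a ∈ factorIdeal (splitObjs E) A B :=
  (QuotientAddGroup.eq_zero_iff _).mp h

lemma kernel_fork_isLimit {A B Kr : ConfObj E} {f : A ⟶ B} {k : Kr ⟶ A}
    (h1 : k ≫ f ∈ factorIdeal (splitObjs E) Kr B)
    (h2 : ∀ (D : ConfObj E) (g : D ⟶ A), g ≫ f ∈ factorIdeal (splitObjs E) D B →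
      ∃ h : D ⟶ Kr, h ≫ k - g ∈ factorIdeal (splitObjs E) D A)
    (h3 : ∀ (D : ConfObj E) (h h' : D ⟶ Kr),
      h ≫ k - h' ≫ k ∈ factorIdeal (splitObjs E) D A →
      h - h' ∈ factorIdeal (splitObjs E) D Kr) :
    Nonempty (IsLimit (KernelFork.ofι (qh k)
      (show qh k ≫ qh f = 0 from (q_comp k f).trans (q_eq_zero h1)))) := by
  have key : ∀ (W : QuotObj (splitObjs E)) (G : W ⟶ QuotObj.mk A),
      G ≫ qh f = 0 →
      Quotient.out G ≫ f ∈ factorIdeal (splitObjs E) W.obj B := by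
    intro W G hG
    apply q_mem_of_eq_zero
    calc qh (Quotient.out G ≫ f)
        = qh (Quotient.out G) ≫ qh f := rfl
      _ = G ≫ qh f := by rw [q_out_eq G]
      _ = 0 := hG
  refine ⟨KernelFork.IsLimit.ofι _ _
    (fun {W} G hG => qh ((h2 W.obj (Quotient.out G) (key W G hG)).choose))
    (fun {W} G hG => ?_) (fun {W} G hG mover hm => ?_)⟩
  · -- factorization
    have hspec := (h2 W.obj (Quotient.out G) (key W G hG)).choose_spec
    calc qh ((h2 W.obj (Quotient.out G) (key W G hG)).choose) ≫ qh k
        = qh ((h2 W.obj (Quotient.out G) (key W G hG)).choose ≫ k) := rfl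
      _ = qh (Quotient.out G) := q_eq_of_sub_mem hspec
      _ = G := q_out_eq G
  · -- uniqueness
    have hspec := (h2 W.obj (Quotient.out G) (key W G hG)).choose_spec
    have e1 : qh (Quotient.out mover ≫ k) =
        qh ((h2 W.obj (Quotient.out G) (key W G hG)).choose ≫ k) := by
      have eA : qh (Quotient.out mover ≫ k) = G := by
        calc qh (Quotient.out mover ≫ k)
            = qh (Quotient.out mover) ≫ qh k := rfl
          _ = mover ≫ qh k := by rw [q_out_eq mover]
          _ = G := hm
      have eB : qh ((h2 W.obj (Quotient.out G) (key W G hG)).choose ≫ k) = G :=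
        (q_eq_of_sub_mem hspec).trans (q_out_eq G)
      rw [eA, eB]
    have hfin := h3 W.obj (Quotient.out mover)
      ((h2 W.obj (Quotient.out G) (key W G hG)).choose) (q_sub_mem_of_eq e1)
    calc mover = qh (Quotient.out mover) := (q_out_eq mover).symm
      _ = qh ((h2 W.obj (Quotient.out G) (key W G hG)).choose) :=
        q_eq_of_sub_mem hfin

lemma cokernel_cofork_isColimit {A B C : ConfObj E} {f : A ⟶ B} {c : B ⟶ C}
    (h1 : f ≫ c ∈ factorIdeal (splitObjs E) A C)
    (h2 : ∀ (D : ConfObj E) (g : B ⟶ D), f ≫ g ∈ factorIdeal (splitObjs E) A D →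
      ∃ h : C ⟶ D, c ≫ h - g ∈ factorIdeal (splitObjs E) B D)
    (h3 : ∀ (D : ConfObj E) (h h' : C ⟶ D),
      c ≫ h - c ≫ h' ∈ factorIdeal (splitObjs E) B D →
      h - h' ∈ factorIdeal (splitObjs E) C D) :
    Nonempty (IsColimit (CokernelCofork.ofπ (qh c)
      (show qh f ≫ qh c = 0 from (q_comp f c).trans (q_eq_zero h1)))) := by
  have key : ∀ (W : QuotObj (splitObjs E)) (G : (QuotObj.mk B : QuotObj (splitObjs E)) ⟶ W),
      qh f ≫ G = 0 →
      f ≫ Quotient.out G ∈ factorIdeal (splitObjs E) A W.obj := by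
    intro W G hG
    apply q_mem_of_eq_zero
    calc qh (f ≫ Quotient.out G)
        = qh f ≫ qh (Quotient.out G) := rfl
      _ = qh f ≫ G := by rw [q_out_eq G]
      _ = 0 := hG
  refine ⟨CokernelCofork.IsColimit.ofπ _ _
    (fun {W} G hG => qh ((h2 W.obj (Quotient.out G) (key W G hG)).choose))
    (fun {W} G hG => ?_) (fun {W} G hG mover hm => ?_)⟩
  · have hspec := (h2 W.obj (Quotient.out G) (key W G hG)).choose_spec
    calc qh c ≫ qh ((h2 W.obj (Quotient.out G) (key W G hG)).choose)
        = qh (c ≫ (h2 W.obj (Quotient.out G) (key W G hG)).choose) := rfl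
      _ = qh (Quotient.out G) := q_eq_of_sub_mem hspec
      _ = G := q_out_eq G
  · have hspec := (h2 W.obj (Quotient.out G) (key W G hG)).choose_spec
    have e1 : qh (c ≫ Quotient.out mover) =
        qh (c ≫ (h2 W.obj (Quotient.out G) (key W G hG)).choose) := by
      have eA : qh (c ≫ Quotient.out mover) = G := by
        calc qh (c ≫ Quotient.out mover)
            = qh c ≫ qh (Quotient.out mover) := rfl
          _ = qh c ≫ mover := by rw [q_out_eq mover]
          _ = G := hm
      have eB : qh (c ≫ (h2 W.obj (Quotient.out G) (key W G hG)).choose) = G :=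
        (q_eq_of_sub_mem hspec).trans (q_out_eq G)
      rw [eA, eB]
    have hfin := h3 W.obj (Quotient.out mover)
      ((h2 W.obj (Quotient.out G) (key W G hG)).choose) (q_sub_mem_of_eq e1)
    calc mover = qh (Quotient.out mover) := (q_out_eq mover).symm
      _ = qh ((h2 W.obj (Quotient.out G) (key W G hG)).choose) :=
        q_eq_of_sub_mem hfin

lemma quot_hasKernels : HasKernels (QuotObj (splitObjs E)) := by
  constructor
  intro X Y F
  obtain ⟨f, rfl⟩ := QuotientAddGroup.mk_surjective F
  obtain ⟨Kr, k, C₀, p, m, C, c, h1, h2, h3, -⟩ := exists_abelian_data f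
  obtain ⟨hl⟩ := kernel_fork_isLimit h1 h2 h3
  exact HasLimit.mk ⟨_, hl⟩

lemma quot_hasCokernels : HasCokernels (QuotObj (splitObjs E)) := by
  constructor
  intro X Y F
  obtain ⟨f, rfl⟩ := QuotientAddGroup.mk_surjective F
  obtain ⟨Kr, k, C₀, p, m, C, c, h1, h2, h3, h4, h5, h6, h7, h8, h9, h10, -⟩ :=
    exists_abelian_data f
  obtain ⟨hl⟩ := cokernel_cofork_isColimit h8 h9 h10
  exact HasColimit.mk ⟨_, hl⟩

end QuotAssembly
/-- the quotient category `E(M)/S(M)` of the category of conflations by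
the split conflations is abelian. -/
theorem conflationQuotient_abelian {M : Type u} [Category.{v} M] [Preadditive M]
    [HasBinaryBiproducts M] (E : ExactStructure M) :
    IsAbelianCat (QuotObj (splitObjs E)) := by
  haveI hk : HasKernels (QuotObj (splitObjs E)) := quot_hasKernels
  haveI hc : HasCokernels (QuotObj (splitObjs E)) := quot_hasCokernels
  refine ⟨hk, hc, ?_⟩
  intro X Y F
  obtain ⟨f, rfl⟩ := QuotientAddGroup.mk_surjective F
  obtain ⟨Kr, k, C₀, p, m, C, c, h1, h2, h3, h4, h5, h6, h7, h8, h9, h10, h11, h12, h13⟩ :=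
    exists_abelian_data f
  obtain ⟨hlk⟩ := kernel_fork_isLimit h1 h2 h3
  obtain ⟨hcp⟩ := cokernel_cofork_isColimit h4 h5 h6
  obtain ⟨hcc⟩ := cokernel_cofork_isColimit h8 h9 h10
  obtain ⟨hlm⟩ := kernel_fork_isLimit h11 h12 h13
  exact isIso_coimageImageComparison_of_data (qh f) (qh k) (qh p) (qh m) (qh c)
    _ hlk _ hcp ((q_comp p m).trans (q_eq_of_sub_mem h7)) _ hcc _ hlm

end PaperQEC
end
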